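/- arXiv:2406.19359 — 5 statements merged into one kernel-verified Lean document; each statement's English description precedes it below -/
import Mathlib

section
/- For every natural number k, every real polynomial R with deg R ≤ k, and every real z ≠ 0, the function F(t) = z^{-(k+1)} · Σ_{j=0}^{⌊k/2⌋} [ (−1)^{j+1} z^{k−2j} cos(zt) R^{(2j)}(t) + (−1)^{j} z^{k−2j−1} sin(zt) R^{(2j+1)}(t) ] satisfies F′(t) = sin(zt)·R(t) for all real t; consequently ∫₀¹ sin(zt) R(t) dt = F(1) − F(0). -/
open Real Polynomial

theorem stmt0 (k : ℕ) (R : Polynomial ℝ) (hR : R.natDegree ≤ k) (z : ℝ) (hz : z ≠ 0)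
    (F : ℝ → ℝ)
    (hF : F = fun t => z ^ (-((k : ℤ) + 1)) *
      ∑ j ∈ Finset.range (k / 2 + 1),
        ((-1 : ℝ) ^ (j + 1) * z ^ ((k : ℤ) - 2 * j) * Real.cos (z * t) *
            ((Polynomial.derivative^[2 * j] R).eval t)
          + (-1 : ℝ) ^ j * z ^ ((k : ℤ) - 2 * j - 1) * Real.sin (z * t) *
            ((Polynomial.derivative^[2 * j + 1] R).eval t))) :
    (∀ t : ℝ, HasDerivAt F (Real.sin (z * t) * R.eval t) t) ∧
    (∫ t in (0 : ℝ)..1, Real.sin (z * t) * R.eval t) = F 1 - F 0 := by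
  have key : ∀ t : ℝ, HasDerivAt F (Real.sin (z * t) * R.eval t) t := by
    intro t
    set g : ℕ → ℝ := fun j =>
      (-1 : ℝ) ^ j * z ^ ((k : ℤ) - 2 * j + 1) * Real.sin (z * t) *
        ((Polynomial.derivative^[2 * j] R).eval t) with hg
    have hzt : HasDerivAt (fun t : ℝ => z * t) z t := by
      simpa using (hasDerivAt_id t).const_mul z
    have hcos : HasDerivAt (fun t : ℝ => Real.cos (z * t)) (-Real.sin (z * t) * z) t :=
      (Real.hasDerivAt_cos (z * t)).comp t hzt
    have hsin : HasDerivAt (fun t : ℝ => Real.sin (z * t)) (Real.cos (z * t) * z) t :=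
      (Real.hasDerivAt_sin (z * t)).comp t hzt
    have hterm : ∀ j : ℕ,
        HasDerivAt (fun t : ℝ =>
          (-1 : ℝ) ^ (j + 1) * z ^ ((k : ℤ) - 2 * j) * Real.cos (z * t) *
              ((Polynomial.derivative^[2 * j] R).eval t)
            + (-1 : ℝ) ^ j * z ^ ((k : ℤ) - 2 * j - 1) * Real.sin (z * t) *
              ((Polynomial.derivative^[2 * j + 1] R).eval t))
          (g j - g (j + 1)) t := by
      intro j
      have hP0 : HasDerivAt (fun t : ℝ => (Polynomial.derivative^[2 * j] R).eval t)
          ((Polynomial.derivative^[2 * j + 1] R).eval t) t := by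
        simpa [Function.iterate_succ_apply'] using
          (Polynomial.derivative^[2 * j] R).hasDerivAt t
      have hP1 : HasDerivAt (fun t : ℝ => (Polynomial.derivative^[2 * j + 1] R).eval t)
          ((Polynomial.derivative^[2 * j + 2] R).eval t) t := by
        simpa [Function.iterate_succ_apply'] using
          (Polynomial.derivative^[2 * j + 1] R).hasDerivAt t
      have h1 := (hcos.mul hP0).const_mul ((-1 : ℝ) ^ (j + 1) * z ^ ((k : ℤ) - 2 * j))
      have h2 := (hsin.mul hP1).const_mul ((-1 : ℝ) ^ j * z ^ ((k : ℤ) - 2 * j - 1))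
      have h := h1.add h2
      have harr : ∀ t : ℝ,
          (-1 : ℝ) ^ (j + 1) * z ^ ((k : ℤ) - 2 * j) *
              (Real.cos (z * t) * ((Polynomial.derivative^[2 * j] R).eval t))
            + (-1 : ℝ) ^ j * z ^ ((k : ℤ) - 2 * j - 1) *
              (Real.sin (z * t) * ((Polynomial.derivative^[2 * j + 1] R).eval t))
          = (-1 : ℝ) ^ (j + 1) * z ^ ((k : ℤ) - 2 * j) * Real.cos (z * t) *
              ((Polynomial.derivative^[2 * j] R).eval t)
            + (-1 : ℝ) ^ j * z ^ ((k : ℤ) - 2 * j - 1) * Real.sin (z * t) *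
              ((Polynomial.derivative^[2 * j + 1] R).eval t) := by
        intro t; ring
      rw [show (fun t : ℝ =>
          (-1 : ℝ) ^ (j + 1) * z ^ ((k : ℤ) - 2 * j) * Real.cos (z * t) *
              ((Polynomial.derivative^[2 * j] R).eval t)
            + (-1 : ℝ) ^ j * z ^ ((k : ℤ) - 2 * j - 1) * Real.sin (z * t) *
              ((Polynomial.derivative^[2 * j + 1] R).eval t)) =
          (fun t : ℝ =>
          (-1 : ℝ) ^ (j + 1) * z ^ ((k : ℤ) - 2 * j) *
              (Real.cos (z * t) * ((Polynomial.derivative^[2 * j] R).eval t))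
            + (-1 : ℝ) ^ j * z ^ ((k : ℤ) - 2 * j - 1) *
              (Real.sin (z * t) * ((Polynomial.derivative^[2 * j + 1] R).eval t)))
          from funext fun t => (harr t).symm]
      refine h.congr_deriv ?_
      symm
      simp only [hg]
      have e0 : ((k : ℤ) - 2 * ((j : ℕ) + 1 : ℕ) + 1) = (k : ℤ) - 2 * j - 1 := by
        push_cast; ring
      have e2 : (2 * (j + 1)) = 2 * j + 2 := by ring
      rw [e2, e0]
      have ez1 : z ^ ((k : ℤ) - 2 * j + 1) = z ^ ((k : ℤ) - 2 * j) * z :=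
        zpow_add_one₀ hz _
      have ez2 : z ^ ((k : ℤ) - 2 * j) = z ^ ((k : ℤ) - 2 * j - 1) * z := by
        rw [← zpow_add_one₀ hz]; ring_nf
      rw [ez1, ez2, pow_succ]
      ring
    have hsum : HasDerivAt (fun t : ℝ =>
        ∑ j ∈ Finset.range (k / 2 + 1),
          ((-1 : ℝ) ^ (j + 1) * z ^ ((k : ℤ) - 2 * j) * Real.cos (z * t) *
              ((Polynomial.derivative^[2 * j] R).eval t)
            + (-1 : ℝ) ^ j * z ^ ((k : ℤ) - 2 * j - 1) * Real.sin (z * t) *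
              ((Polynomial.derivative^[2 * j + 1] R).eval t)))
        (∑ j ∈ Finset.range (k / 2 + 1), (g j - g (j + 1))) t :=
      HasDerivAt.fun_sum fun j _ => hterm j
    have htel : (∑ j ∈ Finset.range (k / 2 + 1), (g j - g (j + 1))) = g 0 - g (k / 2 + 1) :=
      Finset.sum_range_sub' g (k / 2 + 1)
    have hzero : (Polynomial.derivative^[2 * (k / 2 + 1)] R) = 0 := by
      apply Polynomial.iterate_derivative_eq_zero
      omega
    have hg0 : g 0 = z ^ ((k : ℤ) + 1) * (Real.sin (z * t) * R.eval t) := by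
      simp [hg]; ring
    have hgn : g (k / 2 + 1) = 0 := by
      simp [hg, hzero]
    have hfin := hsum.const_mul (z ^ (-((k : ℤ) + 1)))
    rw [hF]
    refine hfin.congr_deriv ?_
    symm
    rw [htel, hg0, hgn, sub_zero, ← mul_assoc, ← zpow_add₀ hz,
      show (-((k : ℤ) + 1) + ((k : ℤ) + 1)) = 0 by ring, zpow_zero, one_mul]
  refine ⟨key, ?_⟩
  exact (intervalIntegral.integral_eq_sub_of_hasDerivAt (fun t _ => key t)
    ((by fun_prop : Continuous fun t : ℝ => Real.sin (z * t) * R.eval t).intervalIntegrable 0 1))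
end

section
/- For every real μ > −1/2 and every z > 0, s_{μ,1/2}(z) = z^{μ} ∫₀¹ (1−t)^{μ−1/2} sin(zt) dt. -/
open Real Nat MeasureTheory intervalIntegral Finset Set

lemma betaReal (a : ℝ) (ha : 0 < a) (n : ℕ) :
    ∫ t in (0:ℝ)..1, (1 - t) ^ (a - 1) * t ^ n
      = (n ! : ℝ) / ∏ j ∈ Finset.range (n + 1), (a + j) := by
  have hu : 0 < Complex.re (a : ℂ) := by simpa using ha
  have h := Complex.betaIntegral_eval_nat_add_one_right hu n
  rw [← Complex.betaIntegral_symm] at h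
  have h2 : ((∫ t in (0:ℝ)..1, (1 - t) ^ (a - 1) * t ^ n : ℝ) : ℂ)
      = Complex.betaIntegral ((n : ℂ) + 1) (a : ℂ) := by
    rw [Complex.betaIntegral, ← intervalIntegral.integral_ofReal]
    refine intervalIntegral.integral_congr fun x hx => ?_
    rw [Set.uIcc_of_le (by norm_num : (0:ℝ) ≤ 1)] at hx
    push_cast
    rw [Complex.ofReal_cpow (by linarith [hx.2] : (0:ℝ) ≤ 1 - x)]
    rw [show ((n : ℂ) + 1 - 1) = (n : ℂ) by ring, Complex.cpow_natCast]
    push_cast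
    ring
  rw [h] at h2
  have h3 : ((∫ t in (0:ℝ)..1, (1 - t) ^ (a - 1) * t ^ n : ℝ) : ℂ)
      = (((n ! : ℝ) / ∏ j ∈ Finset.range (n + 1), (a + j) : ℝ) : ℂ) := by
    rw [h2]; push_cast; ring
  exact_mod_cast h3

lemma prodEq (μ : ℝ) : ∀ k : ℕ,
    ∏ j ∈ Finset.range (k + 1), ((μ + 2 * (j : ℝ) + 1) ^ 2 - (1/2 : ℝ) ^ 2)
      = ∏ j ∈ Finset.range (2 * k + 2), (μ + 1/2 + (j : ℝ))
  | 0 => by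
      rw [Finset.prod_range_succ, Finset.prod_range_zero,
        show 2 * 0 + 2 = 0 + 1 + 1 by rfl, Finset.prod_range_succ,
        Finset.prod_range_succ, Finset.prod_range_zero]
      push_cast; ring
  | (k+1) => by
      rw [Finset.prod_range_succ, prodEq μ k]
      conv_rhs => rw [show 2 * (k+1) + 2 = (2*k+2) + 1 + 1 by ring,
        Finset.prod_range_succ, Finset.prod_range_succ]
      push_cast
      ring

/-- The Lommel function `s_{μ,ν}(z)`, defined for `z > 0` by its convergent series. -/
noncomputable def lommelS (μ ν z : ℝ) : ℝ :=
  ∑' k : ℕ, (-1 : ℝ) ^ k * z ^ (μ + 2 * (k : ℝ) + 1) /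
    ∏ j ∈ Finset.range (k + 1), ((μ + 2 * (j : ℝ) + 1) ^ 2 - ν ^ 2)

theorem stmt1 (μ : ℝ) (hμ : -1/2 < μ) (z : ℝ) (hz : 0 < z) :
    lommelS μ (1/2) z = z ^ μ * ∫ t in (0:ℝ)..1, (1 - t) ^ (μ - 1/2) * Real.sin (z * t) := by
  set a : ℝ := μ - 1/2 with ha_def
  have ha : -1 < a := by rw [ha_def]; linarith
  -- integrability of (1-t)^a on [0,1]
  have hg_int : IntervalIntegrable (fun t : ℝ => (1 - t) ^ a) volume 0 1 := by
    have h1 : IntervalIntegrable (fun x : ℝ => x ^ a) volume 0 1 := intervalIntegrable_rpow' ha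
    simpa using (h1.comp_sub_left 1).symm
  have hg_on : IntegrableOn (fun t : ℝ => (1 - t) ^ a) (Set.Ioc (0:ℝ) 1) volume := by
    rw [intervalIntegrable_iff, Set.uIoc_of_le (by norm_num : (0:ℝ) ≤ 1)] at hg_int
    exact hg_int
  -- the terms
  set F : ℕ → ℝ → ℝ := fun k t =>
    ((-1:ℝ) ^ k * z ^ (2*k+1) / ((2*k+1)! : ℝ)) * ((1 - t) ^ a * t ^ (2*k+1)) with hF_def
  have hc : Summable fun k : ℕ => z ^ (2*k+1) / ((2*k+1)! : ℝ) :=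
    (Real.summable_pow_div_factorial z).comp_injective (fun k l h => by omega)
  -- key HasSum of integrals
  have key : HasSum (fun k : ℕ => ∫ t in Set.Ioc (0:ℝ) 1, F k t)
      (∫ t in Set.Ioc (0:ℝ) 1, (1 - t) ^ a * Real.sin (z * t)) := by
    refine MeasureTheory.hasSum_integral_of_dominated_convergence
      (fun k t => z ^ (2*k+1) / ((2*k+1)! : ℝ) * (1 - t) ^ a) (fun k => ?_) (fun k => ?_)
      ?_ ?_ ?_
    · apply Measurable.aestronglyMeasurable
      fun_prop
    · rw [ae_restrict_iff' measurableSet_Ioc]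
      refine ae_of_all _ fun t ht => ?_
      have ht0 : 0 < t := ht.1
      have ht1 : t ≤ 1 := ht.2
      have h1t : (0:ℝ) ≤ 1 - t := by linarith
      have habs : ‖F k t‖ = z ^ (2*k+1) / ((2*k+1)! : ℝ) * ((1 - t) ^ a * t ^ (2*k+1)) := by
        rw [hF_def]
        simp only [Real.norm_eq_abs, abs_mul, abs_div, abs_pow, abs_neg, abs_one, one_pow,
          one_mul, Nat.abs_cast, abs_of_nonneg (Real.rpow_nonneg h1t a),
          abs_of_nonneg ht0.le, abs_of_nonneg hz.le]
      rw [habs]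
      have h5 : (1 - t) ^ a * t ^ (2*k+1) ≤ (1 - t) ^ a * 1 :=
        mul_le_mul_of_nonneg_left (pow_le_one₀ ht0.le ht1) (Real.rpow_nonneg h1t a)
      calc z ^ (2*k+1) / ((2*k+1)! : ℝ) * ((1 - t) ^ a * t ^ (2*k+1))
          ≤ z ^ (2*k+1) / ((2*k+1)! : ℝ) * ((1 - t) ^ a * 1) :=
            mul_le_mul_of_nonneg_left h5 (by positivity)
        _ = z ^ (2*k+1) / ((2*k+1)! : ℝ) * (1 - t) ^ a := by ring
    · exact ae_of_all _ fun t => hc.mul_right _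
    · simp only [tsum_mul_right]
      exact hg_on.const_mul _
    · refine ae_of_all _ fun t => ?_
      have h := (Real.hasSum_sin (z * t)).mul_left ((1 - t) ^ a)
      have e : ∀ k : ℕ, F k t = (1 - t) ^ a * ((-1:ℝ) ^ k * (z * t) ^ (2 * k + 1) / ((2 * k + 1)! : ℝ)) := by
        intro k
        rw [hF_def]
        simp only [mul_pow]
        ring
      simp only [e]
      exact h
  -- value of each integral
  have hprodpos : ∀ k : ℕ, (0:ℝ) < ∏ j ∈ Finset.range (2*k + 2), (μ + 1/2 + (j : ℝ)) := by
    intro k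
    refine Finset.prod_pos fun j _ => ?_
    have : (0:ℝ) ≤ (j:ℝ) := Nat.cast_nonneg j
    linarith
  have hFint : ∀ k : ℕ, ∫ t in Set.Ioc (0:ℝ) 1, F k t
      = ((-1:ℝ) ^ k * z ^ (2*k+1) / ((2*k+1)! : ℝ)) *
        (((2*k+1)! : ℝ) / ∏ j ∈ Finset.range (2*k + 2), (μ + 1/2 + (j : ℝ))) := by
    intro k
    rw [← intervalIntegral.integral_of_le (by norm_num : (0:ℝ) ≤ 1)]
    rw [hF_def]
    rw [intervalIntegral.integral_const_mul]
    congr 1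
    have hb := betaReal (μ + 1/2) (by linarith) (2*k+1)
    rw [show μ + 1/2 - 1 = a by rw [ha_def]; ring,
      show 2*k+1+1 = 2*k+2 by ring] at hb
    exact hb
  -- assemble
  rw [lommelS, intervalIntegral.integral_of_le (by norm_num : (0:ℝ) ≤ 1),
    ← key.tsum_eq, ← tsum_mul_left]
  refine tsum_congr fun k => ?_
  rw [hFint k, prodEq μ k]
  have hfac : ((2*k+1)! : ℝ) ≠ 0 := Nat.cast_ne_zero.mpr (Nat.factorial_ne_zero _)
  have hP : (∏ j ∈ Finset.range (2*k + 2), (μ + 1/2 + (j : ℝ))) ≠ 0 := (hprodpos k).ne'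
  rw [show μ + 2*(k:ℝ) + 1 = μ + ((2*k+1 : ℕ) : ℝ) by push_cast; ring,
    Real.rpow_add hz, Real.rpow_natCast]
  have hst : ∀ A f P : ℝ, f ≠ 0 → A / f * (f / P) = A / P := by
    intro A f P hf
    rw [_root_.div_mul_div_comm, mul_comm A f, _root_.mul_div_mul_left _ _ hf]
  rw [hst _ _ _ hfac]
  ring
end

section
/- For every real ν with cos(νπ/2) ≠ 0 and every z > 0, s_{0,ν}(z) = (1/cos(νπ/2)) ∫₀^{π/2} sin(z cos θ) cos(νθ) dθ. -/
open Real

open intervalIntegral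


lemma factor_ne (ν : ℝ) (hν : Real.cos (ν * π / 2) ≠ 0) (j : ℕ) :
    (2 * (j:ℝ) + 1) ^ 2 - ν ^ 2 ≠ 0 := by
  intro h
  have h2 : (2 * (j:ℝ) + 1 - ν) * (2 * (j:ℝ) + 1 + ν) = 0 := by linear_combination h
  rcases mul_eq_zero.1 h2 with h3 | h3
  · exact hν (Real.cos_eq_zero_iff.2 ⟨j, by push_cast; linear_combination (-(π/2)) * h3⟩)
  · exact hν (Real.cos_eq_zero_iff.2 ⟨-(j+1), by push_cast; linear_combination (π/2) * h3⟩)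

lemma hasDerivAt_A (ν : ℝ) (n : ℕ) (θ : ℝ) :
    HasDerivAt (fun x => ν * Real.cos x ^ (n+2) * Real.sin (ν*x)
        - ((n:ℝ)+2) * Real.cos x ^ (n+1) * Real.sin x * Real.cos (ν*x))
      ((ν^2 - ((n:ℝ)+2)^2) * Real.cos θ ^ (n+2) * Real.cos (ν*θ)
        + ((n:ℝ)+2)*((n:ℝ)+1) * Real.cos θ ^ n * Real.cos (ν*θ)) θ := by
  have hc : HasDerivAt Real.cos (-Real.sin θ) θ := Real.hasDerivAt_cos θ
  have hs : HasDerivAt Real.sin (Real.cos θ) θ := Real.hasDerivAt_sin θ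
  have hsν : HasDerivAt (fun x => Real.sin (ν*x)) (Real.cos (ν*θ) * (ν*1)) θ :=
    (Real.hasDerivAt_sin (ν*θ)).comp θ ((hasDerivAt_id θ).const_mul ν)
  have hcν : HasDerivAt (fun x => Real.cos (ν*x)) (-Real.sin (ν*θ) * (ν*1)) θ :=
    (Real.hasDerivAt_cos (ν*θ)).comp θ ((hasDerivAt_id θ).const_mul ν)
  have h1 : HasDerivAt (fun x => Real.cos x ^ (n+2))
      (((n:ℝ)+2) * Real.cos θ ^ (n+1) * (-Real.sin θ)) θ := by
    have := hc.pow (n+2)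
    norm_num at this ⊢
    exact this.congr_deriv (by push_cast; ring)
  have h2 : HasDerivAt (fun x => Real.cos x ^ (n+1))
      (((n:ℝ)+1) * Real.cos θ ^ n * (-Real.sin θ)) θ := by
    have := hc.pow (n+1)
    norm_num at this ⊢
    exact this.congr_deriv (by push_cast; ring)
  have hA := (((h1.const_mul ν).mul hsν)).sub
    ((((h2.const_mul (((n:ℝ)+2))).mul hs).mul hcν))
  refine hA.congr_deriv (Eq.symm ?_)
  have hsq : Real.sin θ ^ 2 = 1 - Real.cos θ ^ 2 := Real.sin_sq θ
  have hpow : Real.cos θ ^ (n+2) = Real.cos θ ^ n * Real.cos θ ^ 2 := by ring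
  have hpow1 : Real.cos θ ^ (n+1) = Real.cos θ ^ n * Real.cos θ := by ring
  simp only [Pi.mul_apply]
  rw [hpow, hpow1]
  linear_combination (-((n:ℝ)+2)*((n:ℝ)+1) * Real.cos θ ^ n * Real.cos (ν*θ)) * hsq

lemma hasDerivAt_A1 (ν θ : ℝ) :
    HasDerivAt (fun x => ν * Real.cos x * Real.sin (ν*x) - Real.sin x * Real.cos (ν*x))
      ((ν^2 - 1) * Real.cos θ * Real.cos (ν*θ)) θ := by
  have hc : HasDerivAt Real.cos (-Real.sin θ) θ := Real.hasDerivAt_cos θ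
  have hs : HasDerivAt Real.sin (Real.cos θ) θ := Real.hasDerivAt_sin θ
  have hsν : HasDerivAt (fun x => Real.sin (ν*x)) (Real.cos (ν*θ) * (ν*1)) θ :=
    (Real.hasDerivAt_sin (ν*θ)).comp θ ((hasDerivAt_id θ).const_mul ν)
  have hcν : HasDerivAt (fun x => Real.cos (ν*x)) (-Real.sin (ν*θ) * (ν*1)) θ :=
    (Real.hasDerivAt_cos (ν*θ)).comp θ ((hasDerivAt_id θ).const_mul ν)
  have hA := ((hc.const_mul ν).mul hsν).sub (hs.mul hcν)
  refine hA.congr_deriv (Eq.symm ?_)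
  have hsq : Real.sin θ ^ 2 = 1 - Real.cos θ ^ 2 := Real.sin_sq θ
  ring

noncomputable def Jint (ν : ℝ) (n : ℕ) : ℝ := ∫ θ in (0:ℝ)..(π/2), Real.cos θ ^ n * Real.cos (ν*θ)

lemma contJ (ν : ℝ) (n : ℕ) : Continuous (fun θ : ℝ => Real.cos θ ^ n * Real.cos (ν*θ)) :=
  (Real.continuous_cos.pow n).mul (Real.continuous_cos.comp (continuous_const.mul continuous_id))

lemma J_base (ν : ℝ) (h1 : (1:ℝ) - ν^2 ≠ 0) : Jint ν 1 = Real.cos (ν*π/2) / (1 - ν^2) := by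
  have key := integral_eq_sub_of_hasDerivAt (a := 0) (b := π/2)
    (fun θ _ => hasDerivAt_A1 ν θ)
    (Continuous.intervalIntegrable (by fun_prop) _ _)
  simp only [mul_assoc] at key
  rw [intervalIntegral.integral_const_mul] at key
  simp only [Real.cos_pi_div_two, Real.sin_pi_div_two, Real.sin_zero, mul_zero, zero_mul,
    one_mul, sub_zero, zero_sub, cos_zero] at key
  have hJ : Jint ν 1 = ∫ θ in (0:ℝ)..(π/2), Real.cos θ * Real.cos (ν*θ) := by
    simp [Jint]
  rw [← hJ] at key
  have hπ : ν * (π/2) = ν * π / 2 := by ring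
  rw [hπ] at key
  field_simp
  linarith [key]

lemma J_rec (ν : ℝ) (n : ℕ) (hne : ((n:ℝ)+2)^2 - ν^2 ≠ 0) :
    Jint ν (n+2) = ((n:ℝ)+2)*((n:ℝ)+1) / (((n:ℝ)+2)^2 - ν^2) * Jint ν n := by
  have key := integral_eq_sub_of_hasDerivAt (a := 0) (b := π/2)
    (fun θ _ => hasDerivAt_A ν n θ)
    (Continuous.intervalIntegrable (by fun_prop) _ _)
  simp only [mul_assoc] at key
  rw [intervalIntegral.integral_add
      (Continuous.intervalIntegrable (by fun_prop) _ _)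
      (Continuous.intervalIntegrable (by fun_prop) _ _),
    intervalIntegral.integral_const_mul, intervalIntegral.integral_const_mul,
    intervalIntegral.integral_const_mul] at key
  simp only [Real.cos_pi_div_two, Real.sin_zero, mul_zero, zero_mul,
    zero_pow (by omega : n+2 ≠ 0), zero_pow (by omega : n+1 ≠ 0), sub_zero, zero_sub,
    neg_zero, sub_self] at key
  have h2 : (ν^2 - ((n:ℝ)+2)^2) * Jint ν (n+2) + ((n:ℝ)+2)*(((n:ℝ)+1) * Jint ν n) = 0 := key
  field_simp
  linarith [h2]


lemma J_formula (ν : ℝ) (hν : Real.cos (ν * π / 2) ≠ 0) (k : ℕ) :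
    Jint ν (2*k+1) = Real.cos (ν*π/2) * (Nat.factorial (2*k+1)) /
      ∏ j ∈ Finset.range (k+1), ((2*(j:ℝ)+1)^2 - ν^2) := by
  induction k with
  | zero =>
      have h1 : (1:ℝ) - ν^2 ≠ 0 := by
        have := factor_ne ν hν 0; norm_num at this ⊢; convert this using 2
      simp only [Nat.mul_zero, Nat.zero_add, Finset.prod_range_one, Nat.cast_zero]
      rw [J_base ν h1]
      norm_num
  | succ k ih =>
      have hne : ((2*k+1:ℕ):ℝ)^2 - ν^2 ≠ 0 := by
        have := factor_ne ν hν k; push_cast at this ⊢; convert this using 2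
      have hne2 : (((2*k+1:ℕ):ℝ)+2)^2 - ν^2 ≠ 0 := by
        have := factor_ne ν hν (k+1); push_cast at this ⊢; convert this using 2; ring
      have hrec := J_rec ν (2*k+1) hne2
      have heq : 2*(k+1)+1 = 2*k+1+2 := by ring
      rw [heq, hrec, ih]
      rw [Finset.prod_range_succ _ (k+1)]
      have hprod : ∏ j ∈ Finset.range (k+1), ((2*(j:ℝ)+1)^2 - ν^2) ≠ 0 :=
        Finset.prod_ne_zero_iff.2 fun j _ => factor_ne ν hν j
      have hfac : ((Nat.factorial (2*k+1+2)) : ℝ) = (((2*k+1:ℕ):ℝ)+2) * (((2*k+1:ℕ):ℝ)+1) * (Nat.factorial (2*k+1) : ℝ) := by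
        rw [show 2*k+1+2 = (2*k+2)+1 by ring, Nat.factorial_succ, Nat.factorial_succ]
        push_cast; ring
      have hlast : (2*((k+1:ℕ):ℝ)+1)^2 - ν^2 = (((2*k+1:ℕ):ℝ)+2)^2 - ν^2 := by push_cast; ring
      rw [hlast]
      field_simp
      rw [hfac]


theorem stmt12 (ν : ℝ) (hν : Real.cos (ν * π / 2) ≠ 0) (z : ℝ) (hz : 0 < z) :
    lommelS 0 ν z = (1 / Real.cos (ν * π / 2)) *
      ∫ θ in (0:ℝ)..(π / 2), Real.sin (z * Real.cos θ) * Real.cos (ν * θ) := by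
  set c := Real.cos (ν * π / 2) with hc
  set P : ℕ → ℝ := fun k => ∏ j ∈ Finset.range (k+1), ((2*(j:ℝ)+1)^2 - ν^2) with hP
  have hPne : ∀ k, P k ≠ 0 := fun k => Finset.prod_ne_zero_iff.2 fun j _ => factor_ne ν hν j
  set a : ℕ → ℝ := fun k => (-1:ℝ)^k * z^(2*k+1) / P k with ha
  -- Step 1: lommelS 0 ν z = ∑' a
  have h1 : lommelS 0 ν z = ∑' k, a k := by
    unfold lommelS
    apply tsum_congr
    intro k
    have hexp : (0:ℝ) + 2*(k:ℝ) + 1 = ((2*k+1 : ℕ) : ℝ) := by push_cast; ring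
    rw [hexp, Real.rpow_natCast]
    congr 1
    apply Finset.prod_congr rfl
    intro j _
    ring
  -- Step 2: termwise integration
  have hsummable : Summable (fun k : ℕ => z^(2*k+1) / (Nat.factorial (2*k+1))) := by
    have := Summable.comp_injective (f := fun n : ℕ => z^n / (Nat.factorial n))
      (i := fun k : ℕ => 2*k+1) (Real.summable_pow_div_factorial z)
      (fun x y h => by simp only [] at h; omega)
    exact this
  have hHasSum : HasSum
      (fun k : ℕ => ∫ θ in (0:ℝ)..(π/2),
        (-1:ℝ)^k * (z * Real.cos θ)^(2*k+1) / (Nat.factorial (2*k+1)) * Real.cos (ν*θ))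
      (∫ θ in (0:ℝ)..(π/2), Real.sin (z * Real.cos θ) * Real.cos (ν * θ)) := by
    apply intervalIntegral.hasSum_integral_of_dominated_convergence
      (bound := fun k _ => z^(2*k+1) / (Nat.factorial (2*k+1)))
    · intro k
      exact (Continuous.aestronglyMeasurable (by fun_prop))
    · intro k
      filter_upwards with t _
      have h1' : |z * Real.cos t| ≤ z := by
        rw [abs_mul, abs_of_pos hz]
        nlinarith [Real.abs_cos_le_one t, abs_nonneg (Real.cos t)]
      have h2 : |(z * Real.cos t)^(2*k+1)| ≤ z^(2*k+1) := by
        rw [abs_pow]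
        exact pow_le_pow_left₀ (abs_nonneg _) h1' _
      have h3 : |Real.cos (ν*t)| ≤ 1 := Real.abs_cos_le_one _
      rw [Real.norm_eq_abs, abs_mul, abs_div, abs_mul, abs_pow, abs_neg, abs_one, one_pow,
        one_mul, abs_of_pos (by positivity : (0:ℝ) < (Nat.factorial (2*k+1) : ℝ))]
      calc |(z * Real.cos t)^(2*k+1)| / ((Nat.factorial (2*k+1) : ℝ)) * |Real.cos (ν*t)|
          ≤ z^(2*k+1) / ((Nat.factorial (2*k+1) : ℝ)) * 1 :=
            mul_le_mul (by gcongr) h3 (abs_nonneg _) (by positivity)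
        _ = z^(2*k+1) / ((Nat.factorial (2*k+1) : ℝ)) := mul_one _
    · filter_upwards with t _
      exact hsummable
    · exact intervalIntegrable_const
    · filter_upwards with t _
      exact (Real.hasSum_sin (z * Real.cos t)).mul_right _
  -- Step 3: evaluate each integral
  have hint : ∀ k : ℕ, (∫ θ in (0:ℝ)..(π/2),
      (-1:ℝ)^k * (z * Real.cos θ)^(2*k+1) / (Nat.factorial (2*k+1)) * Real.cos (ν*θ))
      = c * a k := by
    intro k
    have : ∀ θ : ℝ, (-1:ℝ)^k * (z * Real.cos θ)^(2*k+1) / (Nat.factorial (2*k+1)) * Real.cos (ν*θ)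
        = ((-1:ℝ)^k * z^(2*k+1) / (Nat.factorial (2*k+1))) * (Real.cos θ^(2*k+1) * Real.cos (ν*θ)) := by
      intro θ; rw [mul_pow]; ring
    rw [intervalIntegral.integral_congr (g := fun θ =>
        ((-1:ℝ)^k * z^(2*k+1) / (Nat.factorial (2*k+1))) * (Real.cos θ^(2*k+1) * Real.cos (ν*θ)))
        (fun θ _ => this θ),
      intervalIntegral.integral_const_mul]
    have hJ : (∫ θ in (0:ℝ)..(π/2), Real.cos θ^(2*k+1) * Real.cos (ν*θ)) = Jint ν (2*k+1) := rfl
    rw [hJ, J_formula ν hν k]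
    have key : ∀ (A F Q d : ℝ), F ≠ 0 → Q ≠ 0 → A / F * (d * F / Q) = d * (A / Q) := by
      intros A F Q d hF hQ; field_simp
    exact key _ _ _ _ (by positivity) (hPne k)
  have h2 : (∫ θ in (0:ℝ)..(π/2), Real.sin (z * Real.cos θ) * Real.cos (ν * θ))
      = c * ∑' k, a k := by
    rw [← hHasSum.tsum_eq]
    rw [tsum_congr hint]
    exact tsum_mul_left
  rw [h1, h2, ← mul_assoc, one_div, inv_mul_cancel₀ hν, one_mul]
end

section
/- For every real ν with sin(νπ/2) ≠ 0 and every z > 0, s_{1,ν}(z) = (z/sin(νπ/2)) ∫₀^{π/2} sin(z cos θ) sin(νθ) sin θ dθ. -/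
open Real

open MeasureTheory intervalIntegral Nat


noncomputable def Cnu (ν : ℝ) (n : ℕ) : ℝ :=
  ∫ θ in (0:ℝ)..(π/2), Real.cos θ ^ n * Real.cos (ν * θ)

noncomputable def Snu (ν : ℝ) (n : ℕ) : ℝ :=
  ∫ θ in (0:ℝ)..(π/2), Real.cos θ ^ n * Real.sin θ * Real.sin (ν * θ)

lemma SnuA (ν : ℝ) (n : ℕ) : Snu ν n = ν / (n + 1) * Cnu ν (n + 1) := by
  have hu : ∀ x ∈ Set.uIcc (0:ℝ) (π/2),
      HasDerivAt (fun θ => Real.sin (ν * θ)) (ν * Real.cos (ν * x)) x := by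
    intro x _
    have := ((hasDerivAt_id x).const_mul ν).sin
    simpa [mul_comm] using this
  have hv : ∀ x ∈ Set.uIcc (0:ℝ) (π/2),
      HasDerivAt (fun θ => -(Real.cos θ ^ (n+1)) / (n + 1))
        (Real.cos x ^ n * Real.sin x) x := by
    intro x _
    have h1 : HasDerivAt (fun θ => Real.cos θ ^ (n+1))
        (((n:ℝ)+1) * Real.cos x ^ n * (-Real.sin x)) x := by
      have := (Real.hasDerivAt_cos x).pow (n+1)
      simp only [Nat.add_sub_cancel] at this
      refine this.congr_deriv (Eq.symm ?_)
      push_cast; ring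
    have h2 := (h1.neg).div_const ((n:ℝ)+1)
    refine h2.congr_deriv (Eq.symm ?_)
    have : ((n:ℝ)+1) ≠ 0 := by positivity
    push_cast
    field_simp
  have hint1 : IntervalIntegrable (fun x => ν * Real.cos (ν * x)) volume 0 (π/2) := by
    apply Continuous.intervalIntegrable; fun_prop
  have hint2 : IntervalIntegrable (fun x => Real.cos x ^ n * Real.sin x) volume 0 (π/2) := by
    apply Continuous.intervalIntegrable; fun_prop
  have := integral_mul_deriv_eq_deriv_mul hu hv hint1 hint2
  have hb : Real.cos (π/2) = 0 := Real.cos_pi_div_two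
  rw [Snu, Cnu]
  have hrw : (∫ θ in (0:ℝ)..(π/2), Real.cos θ ^ n * Real.sin θ * Real.sin (ν * θ)) =
      ∫ θ in (0:ℝ)..(π/2), Real.sin (ν * θ) * (Real.cos θ ^ n * Real.sin θ) := by
    congr 1; ext θ; ring
  rw [hrw, this]
  rw [hb]
  simp only [zero_pow (Nat.succ_ne_zero n), mul_zero, neg_zero, zero_div, mul_zero,
    Real.sin_zero, zero_mul, sub_zero, zero_sub]
  rw [← intervalIntegral.integral_const_mul]
  rw [← intervalIntegral.integral_neg]
  congr 1; ext θ
  have : ((n:ℝ)+1) ≠ 0 := by positivity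
  field_simp

lemma SnuB (ν : ℝ) (hν : ν ≠ 0) (n : ℕ) :
    ν * Snu ν (n+1) = (n + 2) * Cnu ν (n + 2) - (n + 1) * Cnu ν n := by
  have hu : ∀ x ∈ Set.uIcc (0:ℝ) (π/2),
      HasDerivAt (fun θ => Real.cos θ ^ (n+1) * Real.sin θ)
        (((n:ℝ)+2) * Real.cos x ^ (n+2) - ((n:ℝ)+1) * Real.cos x ^ n) x := by
    intro x _
    have h1 : HasDerivAt (fun θ => Real.cos θ ^ (n+1))
        (((n:ℝ)+1) * Real.cos x ^ n * (-Real.sin x)) x := by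
      have := (Real.hasDerivAt_cos x).pow (n+1)
      simp only [Nat.add_sub_cancel] at this
      refine this.congr_deriv (Eq.symm ?_)
      push_cast; ring
    have h2 := h1.mul (Real.hasDerivAt_sin x)
    refine h2.congr_deriv (Eq.symm ?_)
    have hs : Real.sin x ^ 2 = 1 - Real.cos x ^ 2 := Real.sin_sq x
    linear_combination (((n:ℝ)+1) * Real.cos x ^ n) * hs
  have hv : ∀ x ∈ Set.uIcc (0:ℝ) (π/2),
      HasDerivAt (fun θ => -Real.cos (ν * θ) / ν) (Real.sin (ν * x)) x := by
    intro x _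
    have h1 := ((hasDerivAt_id x).const_mul ν).cos
    have h2 := (h1.neg).div_const ν
    refine h2.congr_deriv (Eq.symm ?_)
    field_simp
    rfl
  have hint1 : IntervalIntegrable
      (fun x => ((n:ℝ)+2) * Real.cos x ^ (n+2) - ((n:ℝ)+1) * Real.cos x ^ n) volume 0 (π/2) := by
    apply Continuous.intervalIntegrable; fun_prop
  have hint2 : IntervalIntegrable (fun x => Real.sin (ν * x)) volume 0 (π/2) := by
    apply Continuous.intervalIntegrable; fun_prop
  have key := integral_mul_deriv_eq_deriv_mul hu hv hint1 hint2
  rw [Real.cos_pi_div_two, Real.sin_zero] at key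
  simp only [zero_pow (Nat.succ_ne_zero n), zero_mul, mul_zero, zero_sub, sub_zero,
    zero_div, neg_zero] at key
  have hSnu : Snu ν (n+1) =
      ∫ x in (0:ℝ)..(π/2), Real.cos x ^ (n+1) * Real.sin x * Real.sin (ν * x) := rfl
  rw [hSnu, key]
  rw [Cnu, Cnu, ← intervalIntegral.integral_const_mul, ← intervalIntegral.integral_const_mul,
    ← intervalIntegral.integral_sub (by apply Continuous.intervalIntegrable; fun_prop)
      (by apply Continuous.intervalIntegrable; fun_prop),
    ← intervalIntegral.integral_neg, ← intervalIntegral.integral_const_mul]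
  congr 1; ext x
  field_simp

lemma Crec (ν : ℝ) (hν : ν ≠ 0) (n : ℕ) :
    (((n:ℝ) + 2)^2 - ν^2) * Cnu ν (n+2) = ((n:ℝ)+2) * ((n:ℝ)+1) * Cnu ν n := by
  have hA : Snu ν (n+1) = ν / ((n:ℝ)+2) * Cnu ν (n+2) := by
    have := SnuA ν (n+1); push_cast at this ⊢; convert this using 3 <;> push_cast <;> ring
  have hB := SnuB ν hν n
  rw [hA] at hB
  have h2 : ((n:ℝ)+2) ≠ 0 := by positivity
  field_simp at hB
  nlinarith [hB]
lemma Czero (ν : ℝ) (hν : ν ≠ 0) : Cnu ν 0 = Real.sin (ν * π / 2) / ν := by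
  rw [Cnu]
  simp only [pow_zero, one_mul]
  rw [intervalIntegral.integral_comp_mul_left Real.cos hν]
  simp [integral_cos]
  rw [inv_mul_eq_div]
  ring_nf

lemma nu_ne_zero {ν : ℝ} (hν : Real.sin (ν * π / 2) ≠ 0) : ν ≠ 0 := by
  rintro rfl; simp at hν

lemma factor_ne_zero {ν : ℝ} (hν : Real.sin (ν * π / 2) ≠ 0) (j : ℕ) :
    (2 * (j:ℝ) + 2)^2 - ν^2 ≠ 0 := by
  intro h
  have h3 : ν^2 = (2*(j:ℝ)+2)^2 := by linarith
  apply hν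
  rcases sq_eq_sq_iff_eq_or_eq_neg.mp h3 with h4 | h4 <;> rw [h4]
  · have : (2*(j:ℝ)+2) * π / 2 = ((j+1 : ℕ) : ℝ) * π := by push_cast; ring
    rw [this, Real.sin_nat_mul_pi]
  · have : -(2*(j:ℝ)+2) * π / 2 = -(((j+1 : ℕ) : ℝ) * π) := by push_cast; ring
    rw [this, Real.sin_neg, Real.sin_nat_mul_pi, neg_zero]

noncomputable def Pprod (ν : ℝ) (k : ℕ) : ℝ :=
  ∏ j ∈ Finset.range k, ((2 * (j:ℝ) + 2)^2 - ν^2)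

lemma Pprod_ne_zero {ν : ℝ} (hν : Real.sin (ν * π / 2) ≠ 0) (k : ℕ) : Pprod ν k ≠ 0 :=
  Finset.prod_ne_zero_iff.mpr fun j _ => factor_ne_zero hν j

lemma Ceven {ν : ℝ} (hν : Real.sin (ν * π / 2) ≠ 0) (k : ℕ) :
    Cnu ν (2*k) = ((2*k)! : ℝ) * Real.sin (ν * π / 2) / (ν * Pprod ν k) := by
  induction k with
  | zero => simp [Pprod, Czero ν (nu_ne_zero hν)]
  | succ k ih =>
    have hν0 := nu_ne_zero hν
    have hfk := factor_ne_zero hν k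
    have hPk := Pprod_ne_zero hν k
    have hC : Cnu ν (2*k+2) =
        ((2*(k:ℝ)+2) * (2*(k:ℝ)+1) * Cnu ν (2*k)) / ((2*(k:ℝ)+2)^2 - ν^2) := by
      rw [eq_div_iff hfk]
      have h := Crec ν hν0 (2*k)
      push_cast at h
      linear_combination h
    have hP : Pprod ν (k+1) = Pprod ν k * ((2*(k:ℝ)+2)^2 - ν^2) := by
      rw [Pprod, Finset.prod_range_succ]; rfl
    have hfactn : (2*(k+1))! = (2*k+2) * ((2*k+1) * (2*k)!) := by
      rw [show 2*(k+1) = (2*k+1)+1 by ring, Nat.factorial_succ, Nat.factorial_succ]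
    rw [show 2*(k+1) = 2*k+2 by ring] at *
    rw [hC, ih, hP, hfactn]
    push_cast
    field_simp
lemma SnuJ {ν : ℝ} (hν : Real.sin (ν * π / 2) ≠ 0) (k : ℕ) :
    Snu ν (2*k+1) = ((2*k+1)! : ℝ) * Real.sin (ν * π / 2) / Pprod ν (k+1) := by
  have hν0 := nu_ne_zero hν
  have hA := SnuA ν (2*k+1)
  have hC := Ceven hν (k+1)
  rw [show 2*(k+1) = 2*k+2 by ring] at hC
  rw [show (2*k+1)+1 = 2*k+2 by ring] at hA
  rw [hA, hC]
  have hfact : (2*k+2)! = (2*k+2) * (2*k+1)! := Nat.factorial_succ (2*k+1)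
  rw [hfact]
  have hP := Pprod_ne_zero hν (k+1)
  have h2 : ((2*k+2 : ℕ):ℝ) ≠ 0 := by positivity
  push_cast
  field_simp
  ring

theorem stmt13 (ν : ℝ) (hν : Real.sin (ν * π / 2) ≠ 0) (z : ℝ) (hz : 0 < z) :
    lommelS 1 ν z = (z / Real.sin (ν * π / 2)) *
      ∫ θ in (0:ℝ)..(π / 2), Real.sin (z * Real.cos θ) * Real.sin (ν * θ) * Real.sin θ := by
  have hν0 := nu_ne_zero hν
  have hple : (0:ℝ) ≤ π/2 := by positivity
  set s := Real.sin (ν * π / 2) with hs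
  set F : ℕ → ℝ → ℝ := fun k θ =>
    ((-1:ℝ)^k * z^(2*k+1) / (2*k+1)!) * (Real.cos θ ^ (2*k+1) * Real.sin θ * Real.sin (ν*θ))
    with hF
  -- pointwise sum
  have hptwise : ∀ θ : ℝ, HasSum (fun k => F k θ)
      (Real.sin (z * Real.cos θ) * Real.sin (ν * θ) * Real.sin θ) := by
    intro θ
    have h := (Real.hasSum_sin (z * Real.cos θ)).mul_right (Real.sin (ν*θ) * Real.sin θ)
    have heq : (fun k => F k θ) =
        fun i => (-1:ℝ)^i * (z*Real.cos θ)^(2*i+1)/((2*i+1)! : ℝ) * (Real.sin (ν*θ)*Real.sin θ) := by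
      funext i; rw [hF]; simp only [mul_pow]; ring
    rw [heq]
    rw [mul_assoc]
    exact h
  -- integrability
  have hFint : ∀ k, IntegrableOn (F k) (Set.Ioc (0:ℝ) (π/2)) volume := by
    intro k
    apply Continuous.integrableOn_Ioc
    fun_prop
  -- norm bound
  have hbound : ∀ k, (∫ θ in Set.Ioc (0:ℝ) (π/2), ‖F k θ‖) ≤
      (π/2) * (z^(2*k+1) / (2*k+1)!) := by
    intro k
    have hconst : (∫ _ in Set.Ioc (0:ℝ) (π/2), (z^(2*k+1) / (2*k+1)! : ℝ)) =
        (π/2) * (z^(2*k+1) / (2*k+1)!) := by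
      rw [setIntegral_const]
      rw [measureReal_def, Real.volume_Ioc]
      rw [ENNReal.toReal_ofReal (by rw [sub_zero]; positivity)]
      simp [smul_eq_mul]
    rw [← hconst]
    apply setIntegral_mono_on ((hFint k).norm)
      ((integrableOn_const_iff).mpr (Or.inr (by rw [Real.volume_Ioc]; exact ENNReal.ofReal_lt_top)))
      measurableSet_Ioc
    intro θ _
    rw [hF]
    simp only [norm_mul, norm_div, norm_pow, norm_neg, norm_one, one_pow, one_mul,
      Real.norm_eq_abs]
    have h1 : |Real.cos θ| ^ (2*k+1) ≤ 1 :=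
      pow_le_one₀ (abs_nonneg _) (Real.abs_cos_le_one θ)
    have h2 : |Real.sin θ| ≤ 1 := Real.abs_sin_le_one θ
    have h3 : |Real.sin (ν*θ)| ≤ 1 := Real.abs_sin_le_one _
    have hz1 : |z| = z := abs_of_pos hz
    have hfpos : (0:ℝ) < ((2*k+1)! : ℝ) := by exact_mod_cast Nat.factorial_pos _
    rw [abs_of_pos hfpos, hz1]
    have hle : |Real.cos θ| ^ (2*k+1) * |Real.sin θ| * |Real.sin (ν*θ)| ≤ 1 := by
      calc |Real.cos θ| ^ (2*k+1) * |Real.sin θ| * |Real.sin (ν*θ)|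
          ≤ 1 * 1 * 1 := by
            apply mul_le_mul (mul_le_mul h1 h2 (abs_nonneg _) (by linarith [h1, pow_nonneg (abs_nonneg (Real.cos θ)) (2*k+1)])) h3 (abs_nonneg _) (by norm_num)
        _ = 1 := by norm_num
    calc z ^ (2*k+1) / ((2*k+1)! : ℝ) * (|Real.cos θ| ^ (2*k+1) * |Real.sin θ| * |Real.sin (ν*θ)|)
        ≤ z ^ (2*k+1) / ((2*k+1)! : ℝ) * 1 := by
          apply mul_le_mul_of_nonneg_left hle (by positivity)
      _ = z ^ (2*k+1) / ((2*k+1)! : ℝ) := by ring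
  -- summability of the bounds
  have hsummable : Summable (fun k => ∫ θ in Set.Ioc (0:ℝ) (π/2), ‖F k θ‖) := by
    have hg : Summable (fun k : ℕ => (π/2) * (z^(2*k+1) / (2*k+1)!)) := by
      have h0 := Real.summable_pow_div_factorial z
      have hinj : Function.Injective (fun k : ℕ => 2*k+1) := by
        intro a b hab
        have h2 : 2*a+1 = 2*b+1 := hab
        omega
      exact ((h0.comp_injective hinj)).mul_left (π/2)
    apply Summable.of_nonneg_of_le (fun k => integral_nonneg (fun θ => norm_nonneg _)) hbound hg
  -- swap
  have hswap := MeasureTheory.integral_tsum_of_summable_integral_norm hFint hsummable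
  -- each integral equals c_k * Snu
  have hterm : ∀ k : ℕ, (∫ θ in Set.Ioc (0:ℝ) (π/2), F k θ) =
      ((-1:ℝ)^k * z^(2*k+1) / (2*k+1)!) * Snu ν (2*k+1) := by
    intro k
    rw [Snu, intervalIntegral.integral_of_le hple, ← MeasureTheory.integral_const_mul]
  -- the interval integral equals the tsum
  have hI : (∫ θ in (0:ℝ)..(π / 2), Real.sin (z * Real.cos θ) * Real.sin (ν * θ) * Real.sin θ)
      = ∑' k : ℕ, ((-1:ℝ)^k * z^(2*k+1) / (2*k+1)!) * Snu ν (2*k+1) := by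
    rw [intervalIntegral.integral_of_le hple]
    have : (∫ θ in Set.Ioc (0:ℝ) (π/2),
        Real.sin (z * Real.cos θ) * Real.sin (ν * θ) * Real.sin θ)
        = ∫ θ in Set.Ioc (0:ℝ) (π/2), ∑' k, F k θ := by
      apply setIntegral_congr_fun measurableSet_Ioc
      intro θ _
      exact ((hptwise θ).tsum_eq).symm
    rw [this, ← hswap]
    exact tsum_congr hterm
  -- now the series side
  rw [hI, ← tsum_mul_left]
  unfold lommelS
  apply tsum_congr
  intro k
  rw [SnuJ hν k]
  have hprod : (∏ j ∈ Finset.range (k + 1), (((1:ℝ) + 2 * (j:ℝ) + 1) ^ 2 - ν ^ 2))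
      = Pprod ν (k+1) := by
    rw [Pprod]
    apply Finset.prod_congr rfl
    intro j _
    ring_nf
  rw [hprod]
  have hrpow : z ^ ((1:ℝ) + 2 * (k:ℝ) + 1) = z ^ (2*k+2 : ℕ) := by
    rw [show (1:ℝ) + 2*(k:ℝ) + 1 = ((2*k+2 : ℕ):ℝ) by push_cast; ring, Real.rpow_natCast]
  rw [hrpow]
  have hP := Pprod_ne_zero hν (k+1)
  have hfpos : ((2*k+1)! : ℝ) ≠ 0 := by positivity
  have hfne : ((2*k+1)! : ℝ) ≠ 0 := ne_of_gt (by exact_mod_cast Nat.factorial_pos _)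
  rw [← hs]
  field_simp
  ring
end

section
/- Let n ≥ 1 be an integer, ν a real number that is not an integer, and θ a real number with 0 < θ < π. Then the series Σ_{k=0}^{∞} [ ∏_{j=0}^{k−1} ((1/2+ν+j)(1/2−ν+j)) / ((n+1/2+j)(j+1)) ] · (sin(θ/2))^{2k} converges and its sum equals ( ∏_{p=0}^{n−1} (2p+1)/(ν−p) ) · (2^{3n−2} sin(θ/2)^{2n−1})^{−1} · Σ_{k=0}^{n−1} [ ∏_{q=1}^{k} ((q−n)(q+ν−n)) / (q(q+ν)) ] · sin((1−n+ν+2k)θ). -/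
open Real Finset Set

namespace Stmt16


variable (ν : ℝ)

/-- hypergeometric coefficients -/
noncomputable def aa (c : ℝ) (k : ℕ) : ℝ :=
  ∏ j ∈ Finset.range k,
    ((1/2 + ν + (j : ℝ)) * (1/2 - ν + (j : ℝ))) / ((c + 1/2 + j) * ((j : ℝ) + 1))

lemma aa_zero (c : ℝ) : aa ν c 0 = 1 := by simp [aa]

lemma aa_succ (c : ℝ) (k : ℕ) :
    aa ν c (k+1) = aa ν c k *
      (((1/2 + ν + (k : ℝ)) * (1/2 - ν + (k : ℝ))) / ((c + 1/2 + k) * ((k : ℝ) + 1))) := by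
  unfold aa
  rw [Finset.prod_range_succ]

/-- master summability -/
lemma master (c : ℝ) (hc : 0 ≤ c) (r : ℝ) (h0 : 0 ≤ r) (h1 : r < 1) :
    Summable (fun k : ℕ => |aa ν c k| * ((k:ℝ)+1)^3 * r^k) := by
  obtain ⟨K, hK⟩ := exists_nat_ge (max (ν^2) (14 / (1 - r)))
  apply summable_of_ratio_norm_eventually_le (r := (1+r)/2) (by linarith)
  filter_upwards [Filter.eventually_ge_atTop K] with k hk
  have hk1 : (ν^2 : ℝ) ≤ k := le_trans (le_trans (le_max_left _ _) hK) (by exact_mod_cast hk)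
  have hk2 : (14 / (1-r) : ℝ) ≤ k := le_trans (le_trans (le_max_right _ _) hK) (by exact_mod_cast hk)
  have hkn : (0:ℝ) ≤ k := Nat.cast_nonneg k
  have habs : |((1/2 + ν + (k : ℝ)) * (1/2 - ν + (k : ℝ)))| ≤ (c + 1/2 + k) * ((k : ℝ) + 1) := by
    rw [abs_le]
    constructor
    · nlinarith [sq_nonneg ((k:ℝ) + 1/2)]
    · nlinarith [sq_nonneg ν]
  have hden : (0:ℝ) < (c + 1/2 + k) * ((k : ℝ) + 1) := by positivity
  have haratio : |aa ν c (k+1)| ≤ |aa ν c k| := by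
    rw [aa_succ, abs_mul, abs_div]
    rw [abs_of_pos hden]
    calc |aa ν c k| * (|(1/2 + ν + (k:ℝ)) * (1/2 - ν + (k:ℝ))| / ((c + 1/2 + k) * ((k:ℝ)+1)))
        ≤ |aa ν c k| * 1 := by
          apply mul_le_mul_of_nonneg_left _ (abs_nonneg _)
          rw [div_le_one hden]; exact habs
      _ = |aa ν c k| := mul_one _
  have hpow : ((k:ℝ)+2)^3 * r ≤ (1+r)/2 * ((k:ℝ)+1)^3 := by
    have h14 : 14 * r ≤ (1 - r) * ((k:ℝ)+1) := by
      rcases le_or_gt r 0 with h | h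
      · nlinarith
      · have : (14:ℝ) ≤ (1-r) * k := by
          rw [div_le_iff₀ (by linarith)] at hk2; linarith [hk2]
        nlinarith
    nlinarith [sq_nonneg ((k:ℝ)+1), pow_nonneg h0 k, sq_nonneg ((k:ℝ))]
  have hterm : |aa ν c (k+1)| * ((k:ℝ)+2)^3 * r^(k+1) ≤ (1+r)/2 * (|aa ν c k| * ((k:ℝ)+1)^3 * r^k) := by
    calc |aa ν c (k+1)| * ((k:ℝ)+2)^3 * r^(k+1)
        ≤ |aa ν c k| * ((k:ℝ)+2)^3 * r^(k+1) := by
          apply mul_le_mul_of_nonneg_right (mul_le_mul_of_nonneg_right haratio (by positivity))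
            (by positivity)
      _ = (|aa ν c k| * r^k) * (((k:ℝ)+2)^3 * r) := by rw [pow_succ]; ring
      _ ≤ (|aa ν c k| * r^k) * ((1+r)/2 * ((k:ℝ)+1)^3) := by
          apply mul_le_mul_of_nonneg_left hpow (by positivity)
      _ = (1+r)/2 * (|aa ν c k| * ((k:ℝ)+1)^3 * r^k) := by ring
  have hc1 : ((k+1:ℕ):ℝ) + 1 = (k:ℝ) + 2 := by push_cast; ring
  rw [Real.norm_of_nonneg (by positivity), Real.norm_of_nonneg (by positivity), hc1]
  exact hterm




lemma sin_half_lt_one {b : ℝ} (hb0 : 0 ≤ b) (hb : b < π) : sin (b/2) < 1 := by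
  have hcos : 0 < cos (b/2) := by
    apply Real.cos_pos_of_mem_Ioo
    constructor <;> [linarith [pi_pos]; linarith]
  have hs : 0 ≤ sin (b/2) := Real.sin_nonneg_of_nonneg_of_le_pi (by linarith) (by linarith [pi_pos])
  nlinarith [Real.sin_sq_add_cos_sq (b/2)]

lemma abs_sin_half_le {y b : ℝ} (hbpi : b ≤ π) (h : |y| ≤ b) : |sin (y/2)| ≤ sin (b/2) := by
  have hpi := Real.pi_pos
  have hb0 : 0 ≤ b := le_trans (abs_nonneg y) h
  have habs := abs_le.mp h
  have hmono := Real.strictMonoOn_sin.monotoneOn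
  have hmem1 : |y|/2 ∈ Icc (-(π/2)) (π/2) := by
    constructor
    · linarith [abs_nonneg y]
    · linarith
  have hmem2 : b/2 ∈ Icc (-(π/2)) (π/2) := by
    constructor <;> [linarith; linarith]
  have key : sin (|y|/2) ≤ sin (b/2) := hmono hmem1 hmem2 (by linarith)
  have : |sin (y/2)| = sin (|y|/2) := by
    rcases le_or_gt 0 y with hy | hy
    · rw [abs_of_nonneg hy, abs_of_nonneg]
      exact Real.sin_nonneg_of_nonneg_of_le_pi (by linarith) (by linarith)
    · rw [abs_of_neg hy]
      have : sin (-y/2) = -sin (y/2) := by rw [neg_div, Real.sin_neg]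
      have hnn : 0 ≤ sin (-y/2) := Real.sin_nonneg_of_nonneg_of_le_pi (by linarith) (by linarith)
      rw [this] at hnn ⊢
      exact abs_of_nonpos (by linarith)
  rw [this]; exact key

lemma hasDerivAt_W (c : ℝ) (hc : 0 ≤ c) (m : ℕ) (hm : 1 ≤ m) {θ₀ : ℝ} (h1 : |θ₀| < π) :
    HasDerivAt (fun θ => ∑' k, aa ν c k * sin (θ/2) ^ (2*k+m))
      (∑' k, aa ν c k * (((2*k+m : ℕ):ℝ) * sin (θ₀/2) ^ (2*k+m-1) * (cos (θ₀/2) * (1/2)))) θ₀ := by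
  have hpi := pi_pos
  set b := (π + |θ₀|)/2 with hbdef
  have hb1 : |θ₀| < b := by rw [hbdef]; linarith
  have hb2 : b < π := by rw [hbdef]; linarith
  have hb0 : 0 < b := lt_of_le_of_lt (abs_nonneg θ₀) hb1
  set r := sin (b/2) with hrdef
  have hr0 : 0 ≤ r := Real.sin_nonneg_of_nonneg_of_le_pi (by linarith) (by linarith)
  have hr1 : r < 1 := sin_half_lt_one hb0.le hb2
  have hbig : ∀ (k : ℕ) (y : ℝ), y ∈ Ioo (-b) b →
      |sin (y/2)| ^ (2*k+m-1) ≤ r ^ k := by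
    intro k y hy
    calc |sin (y/2)| ^ (2*k+m-1) ≤ r ^ (2*k+m-1) := by
          apply pow_le_pow_left₀ (abs_nonneg _)
          exact abs_sin_half_le hb2.le (abs_le.mpr ⟨hy.1.le, hy.2.le⟩)
      _ ≤ r ^ k := pow_le_pow_of_le_one hr0 hr1.le (by omega)
  have hfac : ∀ k : ℕ, ((2*k+m : ℕ):ℝ) * (1/2) ≤ ((m:ℝ)+2) * ((k:ℝ)+1)^3 := by
    intro k
    have h3 : ((k:ℝ)+1) ≤ ((k:ℝ)+1)^3 := by nlinarith [Nat.cast_nonneg (α := ℝ) k, sq_nonneg ((k:ℝ)+1)]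
    have hm1 : (1:ℝ) ≤ (m:ℝ) := by exact_mod_cast hm
    push_cast
    nlinarith [Nat.cast_nonneg (α := ℝ) k]
  have hmem : θ₀ ∈ Ioo (-b) b := mem_Ioo.mpr ⟨(abs_lt.mp hb1).1, (abs_lt.mp hb1).2⟩
  refine hasDerivAt_tsum_of_isPreconnected
    (u := fun k => ((m:ℝ)+2) * (|aa ν c k| * ((k:ℝ)+1)^3 * r^k))
    (((master ν c hc r hr0 hr1).mul_left _)) isOpen_Ioo isPreconnected_Ioo
    (g' := fun k y => aa ν c k * (((2*k+m : ℕ):ℝ) * sin (y/2) ^ (2*k+m-1) * (cos (y/2) * (1/2))))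
    ?_ ?_ hmem ?_ hmem
  · intro k y _
    have hsin : HasDerivAt (fun y : ℝ => sin (y/2)) (cos (y/2) * (1/2)) y := by
      simpa [Function.comp_def] using (Real.hasDerivAt_sin (y/2)).comp y ((hasDerivAt_id y).div_const 2)
    exact (hsin.pow (2*k+m)).const_mul (aa ν c k)
  · intro k y hy
    rw [Real.norm_eq_abs, abs_mul, abs_mul, abs_mul]
    have h1' : |((2*k+m : ℕ):ℝ)| = ((2*k+m : ℕ):ℝ) := abs_of_nonneg (Nat.cast_nonneg _)
    have h2' : |cos (y/2) * (1/2)| ≤ 1/2 := by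
      rw [abs_mul]
      calc |cos (y/2)| * |(1/2 : ℝ)| ≤ 1 * |(1/2 : ℝ)| :=
            mul_le_mul_of_nonneg_right (Real.abs_cos_le_one _) (abs_nonneg _)
        _ = 1/2 := by norm_num
    rw [h1', abs_pow]
    calc |aa ν c k| * (((2*k+m : ℕ):ℝ) * |sin (y/2)| ^ (2*k+m-1) * |cos (y/2) * (1/2)|)
        ≤ |aa ν c k| * (((2*k+m : ℕ):ℝ) * r ^ k * (1/2)) := by
          apply mul_le_mul_of_nonneg_left _ (abs_nonneg _)
          have := hbig k y hy
          apply mul_le_mul (mul_le_mul_of_nonneg_left this (Nat.cast_nonneg _)) h2'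
            (abs_nonneg _)
          positivity
      _ ≤ |aa ν c k| * ((((m:ℝ)+2) * ((k:ℝ)+1)^3) * r ^ k) := by
          apply mul_le_mul_of_nonneg_left _ (abs_nonneg _)
          have := hfac k
          have hrk : (0:ℝ) ≤ r ^ k := pow_nonneg hr0 k
          nlinarith
      _ = ((m:ℝ)+2) * (|aa ν c k| * ((k:ℝ)+1)^3 * r^k) := by ring
  · apply Summable.of_norm_bounded (master ν c hc r hr0 hr1)
    intro k
    rw [Real.norm_eq_abs, abs_mul, abs_pow]
    have hb' : |sin (θ₀/2)| ^ (2*k+m) ≤ r ^ k := by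
      calc |sin (θ₀/2)| ^ (2*k+m) ≤ r ^ (2*k+m) := by
            apply pow_le_pow_left₀ (abs_nonneg _)
            exact abs_sin_half_le hb2.le (le_of_lt hb1)
        _ ≤ r ^ k := pow_le_pow_of_le_one hr0 hr1.le (by omega)
    calc |aa ν c k| * |sin (θ₀/2)| ^ (2*k+m) ≤ |aa ν c k| * r ^ k :=
          mul_le_mul_of_nonneg_left hb' (abs_nonneg _)
      _ ≤ |aa ν c k| * ((k:ℝ)+1)^3 * r^k := by
          have : (1:ℝ) ≤ ((k:ℝ)+1)^3 := by nlinarith [Nat.cast_nonneg (α := ℝ) k, sq_nonneg ((k:ℝ)+1)]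
          have hrk : (0:ℝ) ≤ r ^ k := pow_nonneg hr0 k
          nlinarith [mul_le_mul_of_nonneg_right
            (mul_le_mul_of_nonneg_left this (abs_nonneg (aa ν c k))) hrk]




lemma summable_of_bound (c : ℝ) (hc : 0 ≤ c) (r : ℝ) (h0 : 0 ≤ r) (h1 : r < 1)
    (f : ℕ → ℝ) (hf : ∀ k, |f k| ≤ |aa ν c k| * ((k:ℝ)+1)^3 * r^k) : Summable f :=
  Summable.of_norm_bounded (master ν c hc r h0 h1) hf

lemma one_le_cube (k : ℕ) : (1:ℝ) ≤ ((k:ℝ)+1)^3 := by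
  nlinarith [Nat.cast_nonneg (α := ℝ) k, sq_nonneg ((k:ℝ)+1)]

/-- second derivative for the base case -/
lemma hasDerivAt_Wd {θ₀ : ℝ} (h1 : |θ₀| < π) :
    HasDerivAt (fun θ => ∑' k, aa ν 1 k * (((2*k+1 : ℕ):ℝ) * sin (θ/2) ^ (2*k+1-1) * (cos (θ/2) * (1/2))))
      (∑' k, aa ν 1 k *
        (((2*k+1 : ℕ):ℝ) * (((2*k+1-1 : ℕ):ℝ) * sin (θ₀/2) ^ (2*k+1-1-1) * (cos (θ₀/2) * (1/2))) *
            (cos (θ₀/2) * (1/2)) +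
          ((2*k+1 : ℕ):ℝ) * sin (θ₀/2) ^ (2*k+1-1) * (-sin (θ₀/2) * (1/2) * (1/2)))) θ₀ := by
  have hpi := pi_pos
  set b := (π + |θ₀|)/2 with hbdef
  have hb1 : |θ₀| < b := by rw [hbdef]; linarith
  have hb2 : b < π := by rw [hbdef]; linarith
  have hb0 : 0 < b := lt_of_le_of_lt (abs_nonneg θ₀) hb1
  set r := sin (b/2) with hrdef
  have hr0 : 0 ≤ r := Real.sin_nonneg_of_nonneg_of_le_pi (by linarith) (by linarith)
  have hr1 : r < 1 := sin_half_lt_one hb0.le hb2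
  have hmem : θ₀ ∈ Ioo (-b) b := mem_Ioo.mpr ⟨(abs_lt.mp hb1).1, (abs_lt.mp hb1).2⟩
  have hsb : ∀ y ∈ Ioo (-b) b, |sin (y/2)| ≤ r :=
    fun y hy => abs_sin_half_le hb2.le (abs_le.mpr ⟨hy.1.le, hy.2.le⟩)
  refine hasDerivAt_tsum_of_isPreconnected
    (u := fun k => |aa ν 1 k| * ((k:ℝ)+1)^3 * r^k)
    (master ν 1 (by norm_num) r hr0 hr1) isOpen_Ioo isPreconnected_Ioo
    (g' := fun k y => aa ν 1 k *
        (((2*k+1 : ℕ):ℝ) * (((2*k+1-1 : ℕ):ℝ) * sin (y/2) ^ (2*k+1-1-1) * (cos (y/2) * (1/2))) *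
            (cos (y/2) * (1/2)) +
          ((2*k+1 : ℕ):ℝ) * sin (y/2) ^ (2*k+1-1) * (-sin (y/2) * (1/2) * (1/2))))
    ?_ ?_ hmem ?_ hmem
  · intro k y _
    have hsin : HasDerivAt (fun y : ℝ => sin (y/2)) (cos (y/2) * (1/2)) y := by
      simpa [Function.comp_def] using (Real.hasDerivAt_sin (y/2)).comp y ((hasDerivAt_id y).div_const 2)
    have hcos : HasDerivAt (fun y : ℝ => cos (y/2)) (-sin (y/2) * (1/2)) y := by
      simpa [Function.comp_def] using (Real.hasDerivAt_cos (y/2)).comp y ((hasDerivAt_id y).div_const 2)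
    have hV : HasDerivAt (fun y : ℝ => cos (y/2) * (1/2)) (-sin (y/2) * (1/2) * (1/2)) y :=
      hcos.mul_const (1/2)
    have hp : HasDerivAt (fun y : ℝ => sin (y/2) ^ (2*k+1-1))
        ((((2*k+1-1 : ℕ)):ℝ) * sin (y/2) ^ (2*k+1-1-1) * (cos (y/2) * (1/2))) y :=
      hsin.pow (2*k+1-1)
    exact ((hp.const_mul (((2*k+1 : ℕ):ℝ))).mul hV).const_mul (aa ν 1 k)
  · intro k y hy
    have hs := hsb y hy
    have h2 : |cos (y/2) * (1/2)| ≤ 1/2 := by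
      rw [abs_mul]
      calc |cos (y/2)| * |(1/2:ℝ)| ≤ 1 * |(1/2:ℝ)| :=
            mul_le_mul_of_nonneg_right (Real.abs_cos_le_one _) (abs_nonneg _)
        _ = 1/2 := by norm_num
    simp only [Nat.add_sub_cancel]
    have habs2 : |((2*k : ℕ):ℝ) * sin (y/2) ^ (2*k-1)| ≤ ((2*k : ℕ):ℝ) * r ^ k := by
      rcases Nat.eq_zero_or_pos k with hk | hk
      · subst hk; norm_num
      · rw [abs_mul, abs_of_nonneg (Nat.cast_nonneg (α := ℝ) _), abs_pow]
        apply mul_le_mul_of_nonneg_left _ (Nat.cast_nonneg _)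
        calc |sin (y/2)| ^ (2*k-1) ≤ r ^ (2*k-1) := pow_le_pow_left₀ (abs_nonneg _) hs _
          _ ≤ r ^ k := pow_le_pow_of_le_one hr0 hr1.le (by omega)
    have habsk : |sin (y/2)| ^ (2*k+1) ≤ r ^ k := by
      calc |sin (y/2)| ^ (2*k+1) ≤ r ^ (2*k+1) := pow_le_pow_left₀ (abs_nonneg _) hs _
        _ ≤ r ^ k := pow_le_pow_of_le_one hr0 hr1.le (by omega)
    have t1 : |((2*k+1 : ℕ):ℝ) * (((2*k : ℕ):ℝ) * sin (y/2) ^ (2*k-1) * (cos (y/2) * (1/2))) *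
          (cos (y/2) * (1/2))| ≤ ((2*k+1 : ℕ):ℝ) * (((2*k : ℕ):ℝ) * r^k * (1/2)) * (1/2) := by
      rw [abs_mul]
      apply mul_le_mul _ h2 (abs_nonneg _) (by positivity)
      rw [abs_mul, abs_of_nonneg (Nat.cast_nonneg (α := ℝ) (2*k+1))]
      apply mul_le_mul_of_nonneg_left _ (Nat.cast_nonneg _)
      rw [abs_mul]
      exact mul_le_mul habs2 h2 (abs_nonneg _) (by positivity)
    have t2 : |((2*k+1 : ℕ):ℝ) * sin (y/2) ^ (2*k) * (-sin (y/2) * (1/2) * (1/2))|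
        ≤ ((2*k+1 : ℕ):ℝ) * r^k * (1/4) := by
      rw [abs_mul, abs_mul, abs_of_nonneg (Nat.cast_nonneg (α := ℝ) (2*k+1))]
      have e1 : |(-sin (y/2) * (1/2) * (1/2))| = |sin (y/2)| * (1/4) := by
        rw [abs_mul, abs_mul, abs_neg]
        rw [abs_of_nonneg (by norm_num : (0:ℝ) ≤ 1/2)]
        ring
      rw [e1, abs_pow]
      calc ((2*k+1 : ℕ):ℝ) * |sin (y/2)| ^ (2*k) * (|sin (y/2)| * (1/4))
          = ((2*k+1 : ℕ):ℝ) * (|sin (y/2)| ^ (2*k+1)) * (1/4) := by rw [pow_succ]; ring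
        _ ≤ ((2*k+1 : ℕ):ℝ) * r^k * (1/4) := by
            apply mul_le_mul_of_nonneg_right _ (by norm_num)
            exact mul_le_mul_of_nonneg_left habsk (Nat.cast_nonneg _)
    rw [Real.norm_eq_abs, abs_mul]
    calc |aa ν 1 k| * |((2*k+1 : ℕ):ℝ) * (((2*k : ℕ):ℝ) * sin (y/2) ^ (2*k-1) * (cos (y/2) * (1/2))) *
            (cos (y/2) * (1/2)) +
          ((2*k+1 : ℕ):ℝ) * sin (y/2) ^ (2*k) * (-sin (y/2) * (1/2) * (1/2))|
        ≤ |aa ν 1 k| * (((2*k+1 : ℕ):ℝ) * (((2*k : ℕ):ℝ) * r^k * (1/2)) * (1/2) +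
            ((2*k+1 : ℕ):ℝ) * r^k * (1/4)) := by
          apply mul_le_mul_of_nonneg_left _ (abs_nonneg _)
          exact (abs_add_le _ _).trans (add_le_add t1 t2)
      _ ≤ |aa ν 1 k| * (((k:ℝ)+1)^3 * r^k) := by
          apply mul_le_mul_of_nonneg_left _ (abs_nonneg _)
          have hrk : (0:ℝ) ≤ r^k := pow_nonneg hr0 k
          calc ((2*k+1 : ℕ):ℝ) * (((2*k : ℕ):ℝ) * r^k * (1/2)) * (1/2) +
                ((2*k+1 : ℕ):ℝ) * r^k * (1/4)
              = ((2*(k:ℝ)+1) * (2*(k:ℝ)+1) * (1/4)) * r^k := by push_cast; ring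
            _ ≤ ((k:ℝ)+1)^3 * r^k := by
                apply mul_le_mul_of_nonneg_right _ hrk
                nlinarith [Nat.cast_nonneg (α := ℝ) k, sq_nonneg ((k:ℝ)+1)]
      _ = |aa ν 1 k| * ((k:ℝ)+1)^3 * r^k := by ring
  · apply summable_of_bound ν 1 (by norm_num) r hr0 hr1
    intro k
    have hs : |sin (θ₀/2)| ≤ r := hsb θ₀ hmem
    have habs : |sin (θ₀/2)| ^ (2*k+1-1) ≤ r ^ k := by
      calc |sin (θ₀/2)| ^ (2*k+1-1) ≤ r ^ (2*k+1-1) := pow_le_pow_left₀ (abs_nonneg _) hs _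
        _ ≤ r ^ k := pow_le_pow_of_le_one hr0 hr1.le (by omega)
    rw [abs_mul]
    have h2 : |cos (θ₀/2) * (1/2)| ≤ 1/2 := by
      rw [abs_mul]
      calc |cos (θ₀/2)| * |(1/2:ℝ)| ≤ 1 * |(1/2:ℝ)| :=
            mul_le_mul_of_nonneg_right (Real.abs_cos_le_one _) (abs_nonneg _)
        _ = 1/2 := by norm_num
    have : |(((2*k+1 : ℕ):ℝ) * sin (θ₀/2) ^ (2*k+1-1) * (cos (θ₀/2) * (1/2)))| ≤ ((k:ℝ)+1)^3 * r^k := by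
      rw [abs_mul, abs_mul, abs_pow, abs_of_nonneg (Nat.cast_nonneg (α := ℝ) _)]
      calc ((2*k+1 : ℕ):ℝ) * |sin (θ₀/2)| ^ (2*k+1-1) * |cos (θ₀/2) * (1/2)|
          ≤ ((2*k+1 : ℕ):ℝ) * r^k * (1/2) := by
            apply mul_le_mul (mul_le_mul_of_nonneg_left habs (Nat.cast_nonneg _)) h2
              (abs_nonneg _) (by positivity)
        _ = ((2*(k:ℝ)+1) * (1/2)) * r^k := by push_cast; ring
        _ ≤ ((k:ℝ)+1)^3 * r^k := by
            apply mul_le_mul_of_nonneg_right _ (pow_nonneg hr0 k)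
            nlinarith [Nat.cast_nonneg (α := ℝ) k, sq_nonneg ((k:ℝ)+1)]
    calc |aa ν 1 k| * |(((2*k+1 : ℕ):ℝ) * sin (θ₀/2) ^ (2*k+1-1) * (cos (θ₀/2) * (1/2)))|
        ≤ |aa ν 1 k| * (((k:ℝ)+1)^3 * r^k) := mul_le_mul_of_nonneg_left this (abs_nonneg _)
      _ = |aa ν 1 k| * ((k:ℝ)+1)^3 * r^k := by ring

lemma summable_of_bound' (c : ℝ) (hc : 0 ≤ c) (r : ℝ) (h0 : 0 ≤ r) (h1 : r < 1) (C : ℝ)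
    (f : ℕ → ℝ) (hf : ∀ k, |f k| ≤ C * (|aa ν c k| * ((k:ℝ)+1)^3 * r^k)) : Summable f :=
  Summable.of_norm_bounded ((master ν c hc r h0 h1).mul_left C) hf

lemma abs_sin_lt_one {θ : ℝ} (h1 : |θ| < π) : |sin (θ/2)| < 1 := by
  have h := abs_sin_half_le (y := θ) (b := |θ|) h1.le le_rfl
  exact lt_of_le_of_lt h (sin_half_lt_one (abs_nonneg θ) h1)

lemma rec1 (k : ℕ) :
    aa ν 1 (k+1) * ((2*(k:ℝ)+3)*(2*(k:ℝ)+2)/4) = aa ν 1 k * ((1/2+(k:ℝ))^2 - ν^2) := by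
  rw [aa_succ]
  have hd : ((1:ℝ) + 1/2 + k) * ((k:ℝ) + 1) ≠ 0 := by positivity
  field_simp
  ring

lemma Wdd_eq {θ : ℝ} (h1 : |θ| < π) :
    (∑' k, aa ν 1 k *
        (((2*k+1 : ℕ):ℝ) * (((2*k+1-1 : ℕ):ℝ) * sin (θ/2) ^ (2*k+1-1-1) * (cos (θ/2) * (1/2))) *
            (cos (θ/2) * (1/2)) +
          ((2*k+1 : ℕ):ℝ) * sin (θ/2) ^ (2*k+1-1) * (-sin (θ/2) * (1/2) * (1/2))))
      = -ν^2 * ∑' k, aa ν 1 k * sin (θ/2) ^ (2*k+1) := by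
  have hs : |sin (θ/2)| < 1 := abs_sin_lt_one h1
  have hs0 : (0:ℝ) ≤ |sin (θ/2)| := abs_nonneg _
  set s := sin (θ/2) with hsdef
  have hpow : ∀ e k : ℕ, k ≤ e → |s| ^ e ≤ |s| ^ k :=
    fun e k hk => pow_le_pow_of_le_one hs0 hs.le hk
  -- the two pieces
  set P : ℕ → ℝ := fun k => aa ν 1 k * (((2*k+1 : ℕ):ℝ) * ((2*k : ℕ):ℝ) / 4) * s ^ (2*k-1) with hPdef
  set Q : ℕ → ℝ := fun k => aa ν 1 k * (((2*k+1 : ℕ):ℝ) * ((2*k+1 : ℕ):ℝ) / 4) * s ^ (2*k+1) with hQdef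
  have hSP : Summable P := by
    apply summable_of_bound' ν 1 (by norm_num) (|s|) hs0 hs 1
    intro k
    rw [one_mul, hPdef]
    rcases Nat.eq_zero_or_pos k with hk | hk
    · subst hk
      simp only [Nat.mul_zero, Nat.cast_zero, mul_zero, zero_mul, zero_div, mul_one, abs_mul]
      norm_num
    · rw [abs_mul, abs_mul, abs_pow]
      have h1' : |(((2*k+1 : ℕ):ℝ) * ((2*k : ℕ):ℝ) / 4)| ≤ ((k:ℝ)+1)^3 := by
        rw [abs_of_nonneg (by positivity)]
        push_cast
        nlinarith [Nat.cast_nonneg (α := ℝ) k, sq_nonneg ((k:ℝ)+1)]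
      have h2' : |s| ^ (2*k-1) ≤ |s| ^ k := hpow _ _ (by omega)
      exact mul_le_mul (mul_le_mul_of_nonneg_left h1' (abs_nonneg _)) h2' (by positivity)
        (by positivity)
  have hSQ : Summable Q := by
    apply summable_of_bound' ν 1 (by norm_num) (|s|) hs0 hs 1
    intro k
    rw [one_mul, hQdef]
    rw [abs_mul, abs_mul, abs_pow]
    have h1' : |(((2*k+1 : ℕ):ℝ) * ((2*k+1 : ℕ):ℝ) / 4)| ≤ ((k:ℝ)+1)^3 := by
      rw [abs_of_nonneg (by positivity)]
      push_cast
      nlinarith [Nat.cast_nonneg (α := ℝ) k, sq_nonneg ((k:ℝ)+1)]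
    have h2' : |s| ^ (2*k+1) ≤ |s| ^ k := hpow _ _ (by omega)
    exact mul_le_mul (mul_le_mul_of_nonneg_left h1' (abs_nonneg _)) h2' (by positivity)
      (by positivity)
  have hterm : ∀ k, aa ν 1 k *
        (((2*k+1 : ℕ):ℝ) * (((2*k+1-1 : ℕ):ℝ) * s ^ (2*k+1-1-1) * (cos (θ/2) * (1/2))) *
            (cos (θ/2) * (1/2)) +
          ((2*k+1 : ℕ):ℝ) * s ^ (2*k+1-1) * (-s * (1/2) * (1/2))) = P k - Q k := by
    intro k
    have pyth : cos (θ/2) ^ 2 = 1 - s ^ 2 := by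
      rw [hsdef]; nlinarith [Real.sin_sq_add_cos_sq (θ/2)]
    simp only [Nat.add_sub_cancel, hPdef, hQdef]
    rcases Nat.eq_zero_or_pos k with hk | hk
    · subst hk; norm_num; ring
    · obtain ⟨j, rfl⟩ := Nat.exists_eq_succ_of_ne_zero hk.ne'
      simp only [(by omega : 2*(j+1)-1 = 2*j+1), (by omega : 2*(j+1)+1 = 2*j+3),
        (by omega : 2*(j+1) = 2*j+2)]
      push_cast
      linear_combination (aa ν 1 (j+1) * ((2*(j:ℝ)+3) * (2*(j:ℝ)+2) / 4) * s ^ (2*j+1)) * pyth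
  rw [tsum_congr hterm, Summable.tsum_sub hSP hSQ]
  -- shift P
  have hP0 : P 0 = 0 := by simp [hPdef]
  have hPsh : (∑' k, P k) = ∑' k, P (k+1) := by
    rw [Summable.tsum_eq_zero_add hSP, hP0, zero_add]
  have hPsh2 : ∀ k : ℕ, P (k+1) = aa ν 1 k * ((1/2+(k:ℝ))^2 - ν^2) * s ^ (2*k+1) := by
    intro k
    have e1 : P (k+1) = aa ν 1 (k+1) * ((2*(k:ℝ)+3)*(2*(k:ℝ)+2)/4) * s ^ (2*k+1) := by
      rw [hPdef]
      simp only [(by omega : 2*(k+1)-1 = 2*k+1)]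
      push_cast
      ring
    rw [e1, rec1]
  have hQ' : ∀ k : ℕ, Q k = aa ν 1 k * ((1/2+(k:ℝ))^2) * s ^ (2*k+1) := by
    intro k
    rw [hQdef]
    push_cast
    ring
  rw [hPsh, tsum_congr hPsh2, tsum_congr hQ']
  have hS1 : Summable (fun k => aa ν 1 k * ((1/2+(k:ℝ))^2 - ν^2) * s ^ (2*k+1)) := by
    apply summable_of_bound' ν 1 (by norm_num) (|s|) hs0 hs (1 + ν^2)
    intro k
    rw [abs_mul, abs_mul, abs_pow]
    have h1' : |((1/2+(k:ℝ))^2 - ν^2)| ≤ (1+ν^2) * ((k:ℝ)+1)^3 := by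
      rw [abs_le]
      constructor
      · nlinarith [Nat.cast_nonneg (α := ℝ) k, sq_nonneg ((k:ℝ)+1), sq_nonneg ν,
          one_le_cube k, mul_le_mul_of_nonneg_left (one_le_cube k) (sq_nonneg ν)]
      · nlinarith [Nat.cast_nonneg (α := ℝ) k, sq_nonneg ((k:ℝ)+1), sq_nonneg ν,
          mul_le_mul_of_nonneg_left (one_le_cube k) (sq_nonneg ν)]
    have h2' : |s| ^ (2*k+1) ≤ |s| ^ k := hpow _ _ (by omega)
    have step1 : |aa ν 1 k| * |(1/2+(k:ℝ))^2 - ν^2| * |s| ^ (2*k+1)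
        ≤ |aa ν 1 k| * ((1+ν^2) * ((k:ℝ)+1)^3) * |s| ^ k :=
      mul_le_mul (mul_le_mul_of_nonneg_left h1' (abs_nonneg _)) h2' (by positivity)
        (by positivity)
    exact step1.trans (le_of_eq (by ring))
  have hS2 : Summable (fun k => aa ν 1 k * ((1/2+(k:ℝ))^2) * s ^ (2*k+1)) := by
    apply summable_of_bound' ν 1 (by norm_num) (|s|) hs0 hs 1
    intro k
    rw [one_mul, abs_mul, abs_mul, abs_pow, abs_pow]
    have h1' : |1/2+(k:ℝ)|^2 ≤ ((k:ℝ)+1)^3 := by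
      rw [abs_of_nonneg (by positivity)]
      nlinarith [Nat.cast_nonneg (α := ℝ) k, sq_nonneg ((k:ℝ)+1)]
    have h2' : |s| ^ (2*k+1) ≤ |s| ^ k := hpow _ _ (by omega)
    exact mul_le_mul (mul_le_mul_of_nonneg_left h1' (abs_nonneg _)) h2' (by positivity)
      (by positivity)
  rw [← Summable.tsum_sub hS1 hS2]
  rw [show (fun k => aa ν 1 k * ((1/2+(k:ℝ))^2 - ν^2) * s ^ (2*k+1)
        - (aa ν 1 k * ((1/2+(k:ℝ))^2) * s ^ (2*k+1)))
      = (fun k => -ν^2 * (aa ν 1 k * s ^ (2*k+1))) from funext fun k => by ring]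
  exact tsum_mul_left

lemma base (hν0 : ν ≠ 0) {θ : ℝ} (h0 : 0 ≤ θ) (h1 : θ < π) :
    ∑' k, aa ν 1 k * sin (θ/2) ^ (2*k+1) = sin (ν*θ) / (2*ν) := by
  have hpi := pi_pos
  set W : ℝ → ℝ := fun x => ∑' k, aa ν 1 k * sin (x/2) ^ (2*k+1) with hWdef
  set Wd : ℝ → ℝ := fun x =>
    ∑' k, aa ν 1 k * (((2*k+1 : ℕ):ℝ) * sin (x/2) ^ (2*k+1-1) * (cos (x/2) * (1/2))) with hWddef
  have hW : ∀ x : ℝ, |x| < π → HasDerivAt W (Wd x) x := by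
    intro x hx
    exact hasDerivAt_W ν 1 (by norm_num) 1 le_rfl hx
  have hWd : ∀ x : ℝ, |x| < π → HasDerivAt Wd (-ν^2 * W x) x := by
    intro x hx
    have h := hasDerivAt_Wd ν hx
    rwa [Wdd_eq ν hx] at h
  have hsc : ∀ x : ℝ, HasDerivAt (fun x => sin (ν*x)) (cos (ν*x) * ν) x := by
    intro x
    simpa [Function.comp_def] using (Real.hasDerivAt_sin (ν*x)).comp x ((hasDerivAt_id x).const_mul ν)
  have hcc : ∀ x : ℝ, HasDerivAt (fun x => cos (ν*x)) (-sin (ν*x) * ν) x := by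
    intro x
    simpa [Function.comp_def] using (Real.hasDerivAt_cos (ν*x)).comp x ((hasDerivAt_id x).const_mul ν)
  set u : ℝ → ℝ := fun x => Wd x * sin (ν*x) - ν * W x * cos (ν*x) with hudef
  set v : ℝ → ℝ := fun x => Wd x * cos (ν*x) + ν * W x * sin (ν*x) with hvdef
  have hu : ∀ x : ℝ, |x| < π → HasDerivAt u 0 x := by
    intro x hx
    have h := ((hWd x hx).mul (hsc x)).sub (((hW x hx).const_mul ν).mul (hcc x))
    exact h.congr_deriv (by ring)
  have hv : ∀ x : ℝ, |x| < π → HasDerivAt v 0 x := by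
    intro x hx
    have h := ((hWd x hx).mul (hcc x)).add (((hW x hx).const_mul ν).mul (hsc x))
    exact h.congr_deriv (by ring)
  have hmem : ∀ x ∈ Icc (0:ℝ) θ, |x| < π := by
    intro x hx
    rw [abs_lt]
    constructor <;> [linarith [hx.1]; linarith [hx.2]]
  have hW0 : W 0 = 0 := by
    rw [hWdef]
    simp only
    have : ∀ k : ℕ, aa ν 1 k * sin ((0:ℝ)/2) ^ (2*k+1) = 0 := by
      intro k
      rw [show ((0:ℝ)/2) = 0 from by norm_num, Real.sin_zero, zero_pow (by omega : 2*k+1 ≠ 0),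
        mul_zero]
    rw [tsum_congr this, tsum_zero]
  have hWd0 : Wd 0 = 1/2 := by
    rw [hWddef]
    simp only
    rw [tsum_eq_single 0]
    · rw [aa_zero]
      norm_num
    · intro b hb
      rw [show ((0:ℝ)/2) = 0 from by norm_num, Real.sin_zero,
        zero_pow (by omega : 2*b+1-1 ≠ 0)]
      ring
  have hu0 : u 0 = 0 := by rw [hudef]; simp [hW0]
  have hv0 : v 0 = 1/2 := by rw [hvdef]; simp [hW0, hWd0]
  have huθ : u θ = 0 := by
    rcases eq_or_lt_of_le h0 with h | h
    · rw [← h, hu0]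
    · have := constant_of_has_deriv_right_zero (f := u) (a := 0) (b := θ)
        (fun x hx => ((hu x (hmem x hx)).continuousAt).continuousWithinAt)
        (fun x hx => (hu x (hmem x ⟨hx.1, hx.2.le⟩)).hasDerivWithinAt)
        θ (by constructor <;> linarith)
      rw [this, hu0]
  have hvθ : v θ = 1/2 := by
    rcases eq_or_lt_of_le h0 with h | h
    · rw [← h, hv0]
    · have := constant_of_has_deriv_right_zero (f := v) (a := 0) (b := θ)
        (fun x hx => ((hv x (hmem x hx)).continuousAt).continuousWithinAt)
        (fun x hx => (hv x (hmem x ⟨hx.1, hx.2.le⟩)).hasDerivWithinAt)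
        θ (by constructor <;> linarith)
      rw [this, hv0]
  have pyth := Real.sin_sq_add_cos_sq (ν*θ)
  rw [hudef] at huθ
  rw [hvdef] at hvθ
  simp only at huθ hvθ
  show W θ = sin (ν*θ) / (2*ν)
  rw [eq_div_iff (mul_ne_zero two_ne_zero hν0)]
  linear_combination (2*sin (ν*θ)) * hvθ - (2*cos (ν*θ)) * huθ - (2*ν*W θ) * pyth




noncomputable def dd (n k : ℕ) : ℝ :=
  ∏ q ∈ Finset.Icc 1 k, (((q:ℝ) - n) * ((q:ℝ) + ν - n)) / ((q:ℝ) * ((q:ℝ) + ν))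

noncomputable def EE (n : ℕ) : ℝ :=
  (∏ p ∈ Finset.range n, (2*(p:ℝ)+1) / (ν - p)) * ((2:ℝ)^(3*n-2))⁻¹

noncomputable def KK (n : ℕ) (θ : ℝ) : ℝ :=
  EE ν n * ∑ k ∈ Finset.range n, dd ν n k * sin ((1 - (n:ℝ) + ν + 2*(k:ℝ)) * θ)

lemma dd_zero (n : ℕ) : dd ν n 0 = 1 := by simp [dd]

lemma dd_succ (n k : ℕ) :
    dd ν n (k+1) = dd ν n k *
      (((((k:ℝ)+1) - n) * (((k:ℝ)+1) + ν - n)) / ((((k:ℝ)+1)) * (((k:ℝ)+1) + ν))) := by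
  unfold dd
  rw [Finset.prod_Icc_succ_top (by omega : 1 ≤ k+1)]
  push_cast
  ring

lemma dd_diag (n : ℕ) (hn : 1 ≤ n) : dd ν n n = 0 := by
  unfold dd
  apply Finset.prod_eq_zero (i := n) (Finset.mem_Icc.mpr ⟨hn, le_rfl⟩)
  simp

lemma nu_nat_add_ne (hν : ∀ m : ℤ, ν ≠ m) (k : ℕ) : (k:ℝ) + ν ≠ 0 := by
  intro h
  exact hν (-(k:ℤ)) (by push_cast; linarith)

lemma nu_sub_ne (hν : ∀ m : ℤ, ν ≠ m) (k : ℕ) : ν - (k:ℝ) ≠ 0 := by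
  intro h
  exact hν (k:ℤ) (by push_cast; linarith)

lemma claimC (hν : ∀ m : ℤ, ν ≠ m) (n : ℕ) : ∀ k : ℕ,
    dd ν (n+1) k * (((k:ℝ) - n) * ((k:ℝ) + ν - n)) = (0 - (n:ℝ)) * (ν - n) * dd ν n k := by
  intro k
  induction k with
  | zero => simp [dd_zero]
  | succ k ih =>
    have hk1 : ((k:ℝ)+1) ≠ 0 := by positivity
    have hk2 : ((k:ℝ)+1) + ν ≠ 0 := by
      intro h
      exact hν (-(k+1:ℤ)) (by push_cast; linarith)
    rw [dd_succ, dd_succ]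
    push_cast
    field_simp
    linear_combination (((k:ℝ)+1-n) * ((k:ℝ)+1+ν-n)) * ih

lemma claimA (hν : ∀ m : ℤ, ν ≠ m) (n k : ℕ) :
    dd ν (n+1) (k+1) * (ν - (n:ℝ) + 2*((k:ℝ)+1)) = (ν - n) * (dd ν n (k+1) - dd ν n k) := by
  have hC := claimC ν hν n k
  have hk1 : ((k:ℝ)+1) ≠ 0 := by positivity
  have hk2 : ((k:ℝ)+1) + ν ≠ 0 := by
    intro h
    exact hν (-(k+1:ℤ)) (by push_cast; linarith)
  rw [dd_succ, dd_succ]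
  push_cast
  field_simp
  linear_combination (ν - (n:ℝ) + 2*((k:ℝ)+1)) * hC

lemma EE_succ (n : ℕ) (hn : 1 ≤ n) :
    EE ν (n+1) = EE ν n * ((2*(n:ℝ)+1) / (ν - n)) * (1/8) := by
  unfold EE
  rw [Finset.prod_range_succ, (by omega : 3*(n+1)-2 = (3*n-2)+3), pow_add]
  rw [mul_inv]
  norm_num
  ring

lemma tele (m : ℕ) (F c : ℕ → ℝ) (hF : F m = 0) :
    ∑ k ∈ Finset.range m, F k * (c k - c (k+1)) =
      ∑ k ∈ Finset.range (m+1), (F k - (if k = 0 then 0 else F (k-1))) * c k := by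
  have h1 : ∑ k ∈ Finset.range (m+1), (F k - (if k = 0 then 0 else F (k-1))) * c k
      = (∑ k ∈ Finset.range (m+1), F k * c k)
        - ∑ k ∈ Finset.range (m+1), (if k = 0 then 0 else F (k-1)) * c k := by
    rw [← Finset.sum_sub_distrib]
    apply Finset.sum_congr rfl
    intros; ring
  have h2 : ∑ k ∈ Finset.range (m+1), F k * c k = ∑ k ∈ Finset.range m, F k * c k := by
    rw [Finset.sum_range_succ, hF, zero_mul, add_zero]
  have h3 : ∑ k ∈ Finset.range (m+1), (if k = 0 then 0 else F (k-1)) * c k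
      = ∑ k ∈ Finset.range m, F k * c (k+1) := by
    rw [Finset.sum_range_succ']
    simp
  rw [h1, h2, h3, ← Finset.sum_sub_distrib]
  apply Finset.sum_congr rfl
  intros; ring

lemma cos_diff_eq (β θ : ℝ) :
    cos ((β-1)*θ) - cos ((β+1)*θ) = 2 * (sin θ * sin (β*θ)) := by
  rw [Real.cos_sub_cos]
  rw [(by ring : ((β-1)*θ + (β+1)*θ)/2 = β*θ), (by ring : ((β-1)*θ - (β+1)*θ)/2 = -θ),
    Real.sin_neg]
  ring

lemma hasDerivAt_KK (n : ℕ) (θ : ℝ) :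
    HasDerivAt (KK ν n)
      (EE ν n * ∑ k ∈ Finset.range n,
        dd ν n k * ((1 - (n:ℝ) + ν + 2*(k:ℝ)) * cos ((1 - (n:ℝ) + ν + 2*(k:ℝ)) * θ))) θ := by
  have h : ∀ k ∈ Finset.range n, HasDerivAt
      (fun θ => dd ν n k * sin ((1 - (n:ℝ) + ν + 2*(k:ℝ)) * θ))
      (dd ν n k * (cos ((1 - (n:ℝ) + ν + 2*(k:ℝ)) * θ) * ((1 - (n:ℝ) + ν + 2*(k:ℝ)) * 1))) θ := by
    intro k _
    exact ((Real.hasDerivAt_sin _).comp θ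
      ((hasDerivAt_id θ).const_mul (1 - (n:ℝ) + ν + 2*(k:ℝ)))).const_mul (dd ν n k)
  have h2 := (HasDerivAt.sum h).const_mul (EE ν n)
  convert h2 using 2
  · rfl
  · rfl
  · simp only [KK, Finset.sum_apply]
  apply Finset.sum_congr rfl
  intros; ring

lemma perk (hν : ∀ m : ℤ, ν ≠ m) (n : ℕ) (hn : 1 ≤ n) (k : ℕ) :
    EE ν (n+1) * ((1 - ((n:ℝ)+1) + ν + 2*(k:ℝ)) * dd ν (n+1) k)
      = (2*(n:ℝ)+1)/8 * EE ν n * (dd ν n k - (if k = 0 then 0 else dd ν n (k-1))) := by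
  have hsub := nu_sub_ne ν hν n
  rw [EE_succ ν n hn]
  rcases Nat.eq_zero_or_pos k with hk | hk
  · subst hk
    simp only [if_pos rfl, if_true, Nat.cast_zero, dd_zero, sub_zero, mul_zero, add_zero, mul_one]
    field_simp
    ring
  · obtain ⟨j, rfl⟩ := Nat.exists_eq_succ_of_ne_zero hk.ne'
    have hA := claimA ν hν n j
    simp only [Nat.succ_ne_zero, if_false, Nat.succ_sub_one, Nat.succ_eq_add_one]
    have harg : (1 - ((n:ℝ)+1) + ν + 2*((j+1:ℕ):ℝ)) = ν - (n:ℝ) + 2*((j:ℝ)+1) := by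
      push_cast; ring
    rw [harg]
    field_simp
    linear_combination (EE ν n) * hA

lemma trig_rel (hν : ∀ m : ℤ, ν ≠ m) (n : ℕ) (hn : 1 ≤ n) (θ : ℝ) :
    EE ν (n+1) * ∑ k ∈ Finset.range (n+1),
        dd ν (n+1) k * ((1 - ((n:ℝ)+1) + ν + 2*(k:ℝ)) * cos ((1 - ((n:ℝ)+1) + ν + 2*(k:ℝ)) * θ))
      = (2*(n:ℝ)+1)/2 * cos (θ/2) * sin (θ/2) * KK ν n θ := by
  have hsc : cos (θ/2) * sin (θ/2) = sin θ / 2 := by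
    have h := Real.sin_two_mul (θ/2)
    rw [(by ring : 2*(θ/2) = θ)] at h
    linarith
  -- left side: push EE inside and apply perk
  have hL : EE ν (n+1) * ∑ k ∈ Finset.range (n+1),
        dd ν (n+1) k * ((1 - ((n:ℝ)+1) + ν + 2*(k:ℝ)) * cos ((1 - ((n:ℝ)+1) + ν + 2*(k:ℝ)) * θ))
      = ∑ k ∈ Finset.range (n+1),
          ((2*(n:ℝ)+1)/8 * EE ν n * (dd ν n k - (if k = 0 then 0 else dd ν n (k-1))))
            * cos ((1 - ((n:ℝ)+1) + ν + 2*(k:ℝ)) * θ) := by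
    rw [Finset.mul_sum]
    apply Finset.sum_congr rfl
    intro k _
    rw [← perk ν hν n hn k]
    ring
  rw [hL]
  have hT : ∑ k ∈ Finset.range (n+1),
        ((2*(n:ℝ)+1)/8 * EE ν n * (dd ν n k - (if k = 0 then 0 else dd ν n (k-1))))
          * cos ((1 - ((n:ℝ)+1) + ν + 2*(k:ℝ)) * θ)
      = (2*(n:ℝ)+1)/8 * EE ν n * ∑ k ∈ Finset.range (n+1),
          (dd ν n k - (if k = 0 then 0 else dd ν n (k-1)))
            * cos ((1 - ((n:ℝ)+1) + ν + 2*(k:ℝ)) * θ) := by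
    rw [Finset.mul_sum]
    apply Finset.sum_congr rfl
    intros; ring
  rw [hT, ← tele n (dd ν n) (fun k => cos ((1 - ((n:ℝ)+1) + ν + 2*(k:ℝ)) * θ)) (dd_diag ν n hn)]
  unfold KK
  rw [Finset.mul_sum, Finset.mul_sum, Finset.mul_sum]
  apply Finset.sum_congr rfl
  intro k _
  rw [(by push_cast; ring : (1 - ((n:ℝ)+1) + ν + 2*(((k+1:ℕ)):ℝ)) = (1 - (n:ℝ) + ν + 2*(k:ℝ)) + 1),
    (by push_cast; ring : (1 - ((n:ℝ)+1) + ν + 2*(k:ℝ)) = (1 - (n:ℝ) + ν + 2*(k:ℝ)) - 1)]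
  rw [cos_diff_eq (1 - (n:ℝ) + ν + 2*(k:ℝ)) θ]
  linear_combination (-(2*(n:ℝ)+1)/2 * EE ν n *
    (dd ν n k * sin ((1 - (n:ℝ) + ν + 2*(k:ℝ)) * θ))) * hsc

lemma coeff_rel (c : ℝ) (hc : 1 ≤ c) (k : ℕ) :
    (2*(k:ℝ) + 2*c - 1) * aa ν c k = (2*c - 1) * aa ν (c-1) k := by
  induction k with
  | zero =>
    unfold aa
    simp
  | succ k ih =>
    have h1 : c + 1/2 + (k:ℝ) ≠ 0 := by positivity
    have h2 : c - 1 + 1/2 + (k:ℝ) ≠ 0 := by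
      have : (0:ℝ) ≤ (k:ℝ) := Nat.cast_nonneg k
      intro h; linarith
    have h3 : (k:ℝ) + 1 ≠ 0 := by positivity
    have hD1 : (c + 1/2 + (k:ℝ)) * ((k:ℝ)+1) ≠ 0 := mul_ne_zero h1 h3
    have hD2 : (c - 1 + 1/2 + (k:ℝ)) * ((k:ℝ)+1) ≠ 0 := mul_ne_zero h2 h3
    have cross : (2*((k:ℝ)+1) + 2*c - 1) * (aa ν c k * ((1/2+ν+(k:ℝ))*(1/2-ν+(k:ℝ))))
          * ((c - 1 + 1/2 + (k:ℝ)) * ((k:ℝ)+1))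
        = (2*c - 1) * (aa ν (c-1) k * ((1/2+ν+(k:ℝ))*(1/2-ν+(k:ℝ))))
          * ((c + 1/2 + (k:ℝ)) * ((k:ℝ)+1)) := by
      linear_combination (((1/2+ν+(k:ℝ))*(1/2-ν+(k:ℝ))) * ((c+1/2+(k:ℝ)) * ((k:ℝ)+1))) * ih
    push_cast
    calc (2*((k:ℝ)+1) + 2*c - 1) * aa ν c (k+1)
        = ((2*((k:ℝ)+1) + 2*c - 1) * (aa ν c k * ((1/2+ν+(k:ℝ))*(1/2-ν+(k:ℝ)))))
            / ((c + 1/2 + (k:ℝ)) * ((k:ℝ)+1)) := by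
          rw [aa_succ]; ring
      _ = ((2*c - 1) * (aa ν (c-1) k * ((1/2+ν+(k:ℝ))*(1/2-ν+(k:ℝ)))))
            / ((c - 1 + 1/2 + (k:ℝ)) * ((k:ℝ)+1)) := (div_eq_div_iff hD1 hD2).mpr cross
      _ = (2*c - 1) * aa ν (c-1) (k+1) := by
          rw [aa_succ]; ring


lemma main (hν : ∀ m : ℤ, ν ≠ m) (n : ℕ) (hn : 1 ≤ n) : ∀ θ : ℝ, 0 ≤ θ → θ < π →
    (∑' k, aa ν (n:ℝ) k * sin (θ/2) ^ (2*k + (2*n-1))) = KK ν n θ := by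
  have hpi := pi_pos
  induction n, hn using Nat.le_induction with
  | base =>
    intro θ h0 h1
    have hb := base ν (fun h => hν 0 (by exact_mod_cast h)) h0 h1
    have he : ∀ k : ℕ, 2*k + (2*1-1) = 2*k+1 := fun k => by omega
    rw [show (fun k => aa ν ((1:ℕ):ℝ) k * sin (θ/2) ^ (2*k + (2*1-1)))
        = (fun k => aa ν 1 k * sin (θ/2) ^ (2*k+1)) from funext fun k => by rw [he k]; norm_num]
    rw [hb]
    unfold KK EE dd
    simp
    ring
  | succ n hn IH =>
    intro θ h0 h1
    have hcast : ((n+1:ℕ):ℝ) = (n:ℝ)+1 := by push_cast; ring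
    rcases eq_or_lt_of_le h0 with h | h
    · -- θ = 0
      rw [← h]
      have hz : ∀ k : ℕ, aa ν ((n+1:ℕ):ℝ) k * sin ((0:ℝ)/2) ^ (2*k + (2*(n+1)-1)) = 0 := by
        intro k
        rw [show ((0:ℝ)/2) = 0 from by norm_num, Real.sin_zero,
          zero_pow (by omega : 2*k + (2*(n+1)-1) ≠ 0), mul_zero]
      rw [tsum_congr hz, tsum_zero]
      unfold KK
      rw [show (∑ k ∈ Finset.range (n+1),
          dd ν (n+1) k * sin ((1 - ((n+1:ℕ):ℝ) + ν + 2*(k:ℝ)) * 0)) = 0 from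
        Finset.sum_eq_zero fun k _ => by rw [mul_zero, Real.sin_zero, mul_zero]]
      rw [mul_zero]
    · -- 0 < θ
      set f' : ℝ → ℝ := fun x => (2*(n:ℝ)+1)/2 * cos (x/2) * sin (x/2) * KK ν n x with hf'def
      have hmemabs : ∀ x ∈ Icc (0:ℝ) θ, |x| < π := by
        intro x hx
        rw [abs_lt]
        constructor <;> [linarith [hx.1]; linarith [hx.2]]
      have derivth : ∀ x ∈ Icc (0:ℝ) θ, HasDerivAt
          (fun y => ∑' k, aa ν ((n+1:ℕ):ℝ) k * sin (y/2) ^ (2*k + (2*(n+1)-1))) (f' x) x := by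
        intro x hx
        have hD := hasDerivAt_W ν ((n+1:ℕ):ℝ) (Nat.cast_nonneg _) (2*(n+1)-1) (by omega)
          (hmemabs x hx)
        have hterm : ∀ k : ℕ, aa ν ((n+1:ℕ):ℝ) k *
            (((2*k+(2*(n+1)-1) : ℕ):ℝ) * sin (x/2) ^ (2*k+(2*(n+1)-1)-1) * (cos (x/2) * (1/2)))
            = (aa ν (n:ℝ) k * sin (x/2) ^ (2*k+(2*n-1))) *
                ((2*(n:ℝ)+1)/2 * cos (x/2) * sin (x/2)) := by
          intro k
          have hcr := coeff_rel ν ((n:ℝ)+1)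
            (by have : (1:ℝ) ≤ (n:ℝ) := by exact_mod_cast hn
                linarith) k
          rw [show (n:ℝ)+1-1 = (n:ℝ) from by ring] at hcr
          rw [hcast]
          rw [show 2*k+(2*(n+1)-1)-1 = (2*k+(2*n-1))+1 from by omega, pow_succ]
          push_cast [show 2*k+(2*(n+1)-1) = 2*k+2*n+1 from by omega]
          linear_combination (sin (x/2) ^ (2*k+(2*n-1)) * sin (x/2) * cos (x/2) * (1/2)) * hcr
        have hval : (∑' k, aa ν ((n+1:ℕ):ℝ) k *
            (((2*k+(2*(n+1)-1) : ℕ):ℝ) * sin (x/2) ^ (2*k+(2*(n+1)-1)-1) * (cos (x/2) * (1/2))))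
            = f' x := by
          rw [tsum_congr hterm, tsum_mul_right,
            IH x hx.1 (lt_of_le_of_lt hx.2 h1)]
          rw [hf'def]
          ring
        rwa [hval] at hD
      have derivKK : ∀ x : ℝ, HasDerivAt (KK ν (n+1)) (f' x) x := by
        intro x
        have hKd := hasDerivAt_KK ν (n+1) x
        have harg : ∀ k : ℕ, (1 - ((n+1:ℕ):ℝ) + ν + 2*(k:ℝ)) = (1 - ((n:ℝ)+1) + ν + 2*(k:ℝ)) := by
          intro k; rw [hcast]
        simp only [harg] at hKd
        rw [trig_rel ν hν n hn x] at hKd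
        exact hKd
      have key := eq_of_has_deriv_right_eq (a := 0) (b := θ)
        (f' := f')
        (f := fun y => ∑' k, aa ν ((n+1:ℕ):ℝ) k * sin (y/2) ^ (2*k + (2*(n+1)-1)))
        (g := KK ν (n+1))
        (fun x hx => (derivth x ⟨hx.1, hx.2.le⟩).hasDerivWithinAt)
        (fun x hx => (derivKK x).hasDerivWithinAt)
        (fun x hx => (derivth x hx).continuousAt.continuousWithinAt)
        (fun x hx => (derivKK x).continuousAt.continuousWithinAt)
        ?_ θ ⟨h0, le_rfl⟩
      · exact key
      · -- f 0 = g 0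
        show (∑' k, aa ν ((n+1:ℕ):ℝ) k * sin ((0:ℝ)/2) ^ (2*k + (2*(n+1)-1))) = KK ν (n+1) 0
        have hz : ∀ k : ℕ, aa ν ((n+1:ℕ):ℝ) k * sin ((0:ℝ)/2) ^ (2*k + (2*(n+1)-1)) = 0 := by
          intro k
          rw [show ((0:ℝ)/2) = 0 from by norm_num, Real.sin_zero,
            zero_pow (by omega : 2*k + (2*(n+1)-1) ≠ 0), mul_zero]
        rw [tsum_congr hz, tsum_zero]
        unfold KK
        rw [show (∑ k ∈ Finset.range (n+1),
            dd ν (n+1) k * sin ((1 - ((n+1:ℕ):ℝ) + ν + 2*(k:ℝ)) * 0)) = 0 from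
          Finset.sum_eq_zero fun k _ => by rw [mul_zero, Real.sin_zero, mul_zero]]
        rw [mul_zero]

end Stmt16

open Real

theorem stmt16 (n : ℕ) (hn : 1 ≤ n) (ν : ℝ) (hν : ∀ m : ℤ, ν ≠ m)
    (θ : ℝ) (hθ : 0 < θ) (hθ' : θ < π) :
    Summable (fun k : ℕ =>
      (∏ j ∈ Finset.range k,
          ((1/2 + ν + (j : ℝ)) * (1/2 - ν + (j : ℝ))) / (((n : ℝ) + 1/2 + j) * ((j : ℝ) + 1))) *
        Real.sin (θ / 2) ^ (2 * k)) ∧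
    (∑' k : ℕ,
      (∏ j ∈ Finset.range k,
          ((1/2 + ν + (j : ℝ)) * (1/2 - ν + (j : ℝ))) / (((n : ℝ) + 1/2 + j) * ((j : ℝ) + 1))) *
        Real.sin (θ / 2) ^ (2 * k)) =
      (∏ p ∈ Finset.range n, (2 * (p : ℝ) + 1) / (ν - p)) *
        ((2 : ℝ) ^ (3 * n - 2) * Real.sin (θ / 2) ^ (2 * n - 1))⁻¹ *
        ∑ k ∈ Finset.range n,
          (∏ q ∈ Finset.Icc 1 k, (((q : ℝ) - n) * ((q : ℝ) + ν - n)) / ((q : ℝ) * ((q : ℝ) + ν))) *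
            Real.sin ((1 - (n : ℝ) + ν + 2 * k) * θ) := by
  have habs : |θ| < π := by rw [abs_lt]; constructor <;> linarith [Real.pi_pos]
  have hslt : |Real.sin (θ/2)| < 1 := Stmt16.abs_sin_lt_one habs
  have hsne : Real.sin (θ/2) ≠ 0 := by
    have := Real.sin_pos_of_pos_of_lt_pi (by linarith : 0 < θ/2) (by linarith [Real.pi_pos] : θ/2 < π)
    linarith
  constructor
  · show Summable (fun k : ℕ => Stmt16.aa ν (n:ℝ) k * Real.sin (θ/2) ^ (2*k))
    apply Stmt16.summable_of_bound ν (n:ℝ) (Nat.cast_nonneg n) (|Real.sin (θ/2)|)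
      (abs_nonneg _) hslt
    intro k
    rw [abs_mul, abs_pow]
    calc |Stmt16.aa ν (n:ℝ) k| * |Real.sin (θ/2)| ^ (2*k)
        ≤ |Stmt16.aa ν (n:ℝ) k| * |Real.sin (θ/2)| ^ k := by
          apply mul_le_mul_of_nonneg_left _ (abs_nonneg _)
          exact pow_le_pow_of_le_one (abs_nonneg _) hslt.le (by omega)
      _ ≤ |Stmt16.aa ν (n:ℝ) k| * ((k:ℝ)+1)^3 * |Real.sin (θ/2)| ^ k := by
          have h1 := Stmt16.one_le_cube k
          have h2 : (0:ℝ) ≤ |Real.sin (θ/2)| ^ k := by positivity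
          nlinarith [abs_nonneg (Stmt16.aa ν (n:ℝ) k),
            mul_le_mul_of_nonneg_right (mul_le_mul_of_nonneg_left h1
              (abs_nonneg (Stmt16.aa ν (n:ℝ) k))) h2]
  · have hmain := Stmt16.main ν hν n hn θ hθ.le hθ'
    have hsplit : ∀ k : ℕ, Stmt16.aa ν (n:ℝ) k * Real.sin (θ/2) ^ (2*k + (2*n-1))
        = (Stmt16.aa ν (n:ℝ) k * Real.sin (θ/2) ^ (2*k)) * Real.sin (θ/2) ^ (2*n-1) := by
      intro k
      rw [pow_add]
      ring
    rw [tsum_congr hsplit, tsum_mul_right] at hmain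
    show (∑' k : ℕ, Stmt16.aa ν (n:ℝ) k * Real.sin (θ/2) ^ (2*k))
      = (∏ p ∈ Finset.range n, (2 * (p : ℝ) + 1) / (ν - p)) *
        ((2 : ℝ) ^ (3 * n - 2) * Real.sin (θ / 2) ^ (2 * n - 1))⁻¹ *
        ∑ k ∈ Finset.range n, Stmt16.dd ν n k * Real.sin ((1 - (n : ℝ) + ν + 2 * (k:ℝ)) * θ)
    have hpow_ne : Real.sin (θ/2) ^ (2*n-1) ≠ 0 := pow_ne_zero _ hsne
    have hre : (∏ p ∈ Finset.range n, (2 * (p : ℝ) + 1) / (ν - p)) *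
        ((2 : ℝ) ^ (3 * n - 2) * Real.sin (θ / 2) ^ (2 * n - 1))⁻¹ *
        (∑ k ∈ Finset.range n, Stmt16.dd ν n k * Real.sin ((1 - (n : ℝ) + ν + 2 * (k:ℝ)) * θ))
        = Stmt16.KK ν n θ * (Real.sin (θ/2) ^ (2*n-1))⁻¹ := by
      unfold Stmt16.KK Stmt16.EE
      rw [mul_inv]
      ring
    rw [hre, ← hmain, mul_inv_cancel_right₀ hpow_ne]
end
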